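/- arXiv:1008.4424 — 5 statements merged into one kernel-verified Lean document; each statement's English description precedes it below -/
import Mathlib

section
/- Let T be a finite tree with at least one edge. Then the 1-capture time of T equals ⌈diam(T)/2⌉. -/
/-!
Cops and Robber game on a simple graph `G` with `k` cops.
Convention (as in the paper): the cops first choose starting positions, then the
robber chooses a starting position; in every subsequent round the robber moves
first (staying or moving to an adjacent vertex) and then each cop moves
(staying or moving to an adjacent vertex).  The cops win as soon as some cop
occupies the robber's vertex.  Strategies have full information: a move may
depend on the round number and on all current positions.
-/

open SimpleGraph

universe u v w

/-- A full-information movement strategy for `k` cops on `G`: given the round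
number, the current cop positions and the robber's current position, each cop
stays or moves along an edge. -/
structure CopMoves {V : Type u} (G : SimpleGraph V) (k : ℕ) where
  move : ℕ → (Fin k → V) → V → (Fin k → V)
  valid : ∀ n c r i, move n c r i = c i ∨ G.Adj (c i) (move n c r i)

/-- A full-information movement strategy for the robber on `G` against `k` cops. -/
structure RobberMoves {V : Type u} (G : SimpleGraph V) (k : ℕ) where
  move : ℕ → (Fin k → V) → V → V
  valid : ∀ n c r, move n c r = r ∨ G.Adj r (move n c r)

/-- The positions (cops, robber) after `n` rounds, starting from the
configuration `(c0, r0)`; in each round the robber moves first, then the cops. -/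
def playFrom {V : Type u} {G : SimpleGraph V} {k : ℕ} (CM : CopMoves G k)
    (RM : RobberMoves G k) (c0 : Fin k → V) (r0 : V) : ℕ → (Fin k → V) × V
  | 0 => (c0, r0)
  | n + 1 =>
      let p := playFrom CM RM c0 r0 n
      let r' := RM.move n p.1 p.2
      (CM.move n p.1 r', r')

/-- The robber is captured within `t` rounds of the play from `(c0, r0)`. -/
def CapturedIn {V : Type u} {G : SimpleGraph V} {k : ℕ} (CM : CopMoves G k)
    (RM : RobberMoves G k) (c0 : Fin k → V) (r0 : V) (t : ℕ) : Prop :=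
  ∃ n ≤ t, ∃ i, (playFrom CM RM c0 r0 n).1 i = (playFrom CM RM c0 r0 n).2

/-- From the configuration `(c0, r0)`, robber to move, the `k` cops can
guarantee capture within `t` rounds. -/
def CopsWinFrom {V : Type u} (G : SimpleGraph V) (k : ℕ) (c0 : Fin k → V) (r0 : V)
    (t : ℕ) : Prop :=
  ∃ CM : CopMoves G k, ∀ RM : RobberMoves G k, CapturedIn CM RM c0 r0 t

/-- In the whole game (cops choose starting vertices, then the robber chooses a
starting vertex), `k` cops can guarantee capture within `t` rounds. -/
def CopsWinIn {V : Type u} (G : SimpleGraph V) (k t : ℕ) : Prop :=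
  ∃ c0 : Fin k → V, ∃ CM : CopMoves G k, ∀ r0 : V, ∀ RM : RobberMoves G k,
    CapturedIn CM RM c0 r0 t

/-- `G` is `k`-cop-win. -/
def IsCopWin {V : Type u} (G : SimpleGraph V) (k : ℕ) : Prop := ∃ t, CopsWinIn G k t

/-- The `k`-capture time of `G`: the least `t` such that `k` cops can guarantee
capture within `t` rounds. -/
noncomputable def captTime {V : Type u} (G : SimpleGraph V) (k : ℕ) : ℕ :=
  sInf {t | CopsWinIn G k t}

section CaptureAux

open SimpleGraph Walk

variable {V : Type u} [Fintype V] {T : SimpleGraph V}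

set_option linter.unusedSectionVars false

noncomputable local instance : DecidableEq V := Classical.decEq V

/-- The unique path between two vertices of a tree. -/
noncomputable def tpath (hT : T.IsTree) (u v : V) : T.Walk u v :=
  (hT.existsUnique_path u v).exists.choose

lemma tpath_isPath (hT : T.IsTree) (u v : V) : (tpath hT u v).IsPath :=
  (hT.existsUnique_path u v).exists.choose_spec

lemma tpath_eq (hT : T.IsTree) {u v : V} (p : T.Walk u v) (hp : p.IsPath) :
    p = tpath hT u v :=
  (hT.existsUnique_path u v).unique hp (tpath_isPath hT u v)

lemma tpath_length (hT : T.IsTree) (u v : V) :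
    (tpath hT u v).length = T.dist u v := by
  refine le_antisymm ?_ (SimpleGraph.dist_le _)
  obtain ⟨w, hw⟩ := hT.isConnected.exists_walk_length_eq_dist u v
  have h1 : w.bypass = tpath hT u v := tpath_eq hT w.bypass w.bypass_isPath
  calc (tpath hT u v).length = w.bypass.length := by rw [h1]
    _ ≤ w.length := w.length_bypass_le
    _ = T.dist u v := hw

lemma dist_add_of_mem_tpath (hT : T.IsTree) {u v w : V}
    (hw : w ∈ (tpath hT u v).support) :
    T.dist u w + T.dist w v = T.dist u v := by
  have h1 : T.dist u w ≤ ((tpath hT u v).takeUntil w hw).length := SimpleGraph.dist_le _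
  have h2 : T.dist w v ≤ ((tpath hT u v).dropUntil w hw).length := SimpleGraph.dist_le _
  have h3 := congrArg Walk.length ((tpath hT u v).take_spec hw)
  rw [Walk.length_append, tpath_length] at h3
  have h4 : T.dist u v ≤ T.dist u w + T.dist w v := hT.isConnected.dist_triangle
  omega

/-- key nesting lemma: the unique paths from `m` to two adjacent vertices are
nested, one being the extension of the other by one edge. -/
lemma tpath_nesting (hT : T.IsTree) (m : V) {r r' : V} (h : T.Adj r r') :
    (T.dist m r' = T.dist m r + 1 ∧
      ∀ j ≤ T.dist m r, (tpath hT m r').getVert j = (tpath hT m r).getVert j) ∨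
    (T.dist m r = T.dist m r' + 1 ∧
      ∀ j ≤ T.dist m r', (tpath hT m r).getVert j = (tpath hT m r').getVert j) := by
  set p := tpath hT m r with hp
  by_cases hr' : r' ∈ p.support
  · right
    have htu : p.takeUntil r' hr' = tpath hT m r' :=
      tpath_eq hT _ ((tpath_isPath hT m r).takeUntil hr')
    have hlen := congrArg Walk.length (p.take_spec hr')
    rw [Walk.length_append, tpath_length] at hlen
    have hta : (p.takeUntil r' hr').length = T.dist m r' := by
      rw [htu, tpath_length]
    have hdrop : 1 ≤ (p.dropUntil r' hr').length := by
      have := SimpleGraph.dist_le (p.dropUntil r' hr')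
      have h1 : T.dist r' r = 1 := SimpleGraph.dist_eq_one_iff_adj.mpr h.symm
      omega
    have htri : T.dist m r ≤ T.dist m r' + 1 := by
      have := hT.isConnected.dist_triangle (u := m) (v := r') (w := r)
      have h1 : T.dist r' r = 1 := SimpleGraph.dist_eq_one_iff_adj.mpr h.symm
      omega
    have hd : T.dist m r = T.dist m r' + 1 := by omega
    refine ⟨hd, fun j hj => ?_⟩
    have hspec := (p.take_spec hr').symm
    rcases lt_or_eq_of_le hj with hj' | hj'
    · rw [← htu]
      conv_lhs => rw [hspec]
      rw [Walk.getVert_append, if_pos (by omega)]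
    · have h1 : p.getVert j = r' := by
        conv_lhs => rw [hspec]
        rw [Walk.getVert_append, if_neg (by omega)]
        have : j - (p.takeUntil r' hr').length = 0 := by omega
        rw [this, Walk.getVert_zero]
      rw [h1, hj', ← tpath_length hT m r', Walk.getVert_length]
  · left
    have hq : (p.concat h).IsPath := by
      rw [← Walk.isPath_reverse_iff, Walk.reverse_concat]
      refine ((tpath_isPath hT m r).reverse).cons ?_
      rwa [Walk.support_reverse, List.mem_reverse]
    have htu : p.concat h = tpath hT m r' := tpath_eq hT _ hq
    have hd : T.dist m r' = T.dist m r + 1 := by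
      rw [← tpath_length hT m r', ← htu, Walk.length_concat, tpath_length]
    refine ⟨hd, fun j hj => ?_⟩
    rw [← htu, Walk.concat_eq_append, Walk.getVert_append]
    rcases lt_or_eq_of_le hj with hj' | hj'
    · rw [if_pos (by rw [tpath_length]; omega)]
    · rw [if_neg (by rw [tpath_length]; omega)]
      have : j - p.length = 0 := by rw [tpath_length]; omega
      rw [this, Walk.getVert_zero, hj', ← tpath_length hT m r, Walk.getVert_length]

/-- The cop's "shadow" position after `k` moves, when the robber is at `r`:
the vertex on the unique path from the centre `m` to `r` at distance
`min k (dist m r)` from `m`. -/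
noncomputable def shadow (hT : T.IsTree) (m : V) (k : ℕ) (r : V) : V :=
  (tpath hT m r).getVert (min k (T.dist m r))

lemma shadow_zero (hT : T.IsTree) (m r : V) : shadow hT m 0 r = m := by
  simp [shadow, Walk.getVert_zero]

lemma shadow_capture (hT : T.IsTree) {m : V} {k : ℕ} {r : V}
    (hk : T.dist m r ≤ k) : shadow hT m k r = r := by
  rw [shadow, min_eq_right hk, ← tpath_length hT m r, Walk.getVert_length]

lemma getVert_step {u v : V} (p : T.Walk u v) {a b : ℕ}
    (ha : a ≤ p.length) (hb : b ≤ p.length) (hab : a = b ∨ a + 1 = b ∨ b + 1 = a) :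
    p.getVert b = p.getVert a ∨ T.Adj (p.getVert a) (p.getVert b) := by
  rcases hab with rfl | hab | hab
  · exact Or.inl rfl
  · subst hab
    exact Or.inr (p.adj_getVert_succ (by omega))
  · subst hab
    exact Or.inr (p.adj_getVert_succ (by omega)).symm

lemma shadow_step (hT : T.IsTree) (m : V) (n : ℕ) {r r' : V}
    (hmove : r' = r ∨ T.Adj r r') :
    shadow hT m (n + 1) r' = shadow hT m n r ∨
      T.Adj (shadow hT m n r) (shadow hT m (n + 1) r') := by
  rcases hmove with rfl | hadj
  · rw [shadow, shadow]
    exact getVert_step _ (by rw [tpath_length]; omega) (by rw [tpath_length]; omega) (by omega)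
  · rcases tpath_nesting hT m hadj with ⟨hd, hg⟩ | ⟨hd, hg⟩
    · have h1 : shadow hT m n r = (tpath hT m r').getVert (min n (T.dist m r)) := by
        rw [shadow, hg _ (min_le_right _ _)]
      rw [h1, shadow]
      exact getVert_step _ (by rw [tpath_length]; omega) (by rw [tpath_length]; omega) (by omega)
    · have h1 : shadow hT m (n + 1) r' = (tpath hT m r).getVert (min (n + 1) (T.dist m r')) := by
        rw [shadow, hg _ (min_le_right _ _)]
      rw [h1, shadow]
      exact getVert_step _ (by rw [tpath_length]; omega) (by rw [tpath_length]; omega) (by omega)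

open Classical in
/-- The cop strategy: always move to the shadow position when possible. -/
noncomputable def copCM (hT : T.IsTree) (m : V) : CopMoves T 1 where
  move n c r i :=
    if shadow hT m (n + 1) r = c i ∨ T.Adj (c i) (shadow hT m (n + 1) r) then
      shadow hT m (n + 1) r
    else c i
  valid n c r i := by
    split <;> tauto

lemma cop_play (hT : T.IsTree) (m : V) (RM : RobberMoves T 1) (r0 : V) (n : ℕ) (i : Fin 1) :
    (playFrom (copCM hT m) RM (fun _ => m) r0 n).1 i =
      shadow hT m n ((playFrom (copCM hT m) RM (fun _ => m) r0 n).2) := by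
  induction n with
  | zero => simp [playFrom, shadow_zero]
  | succ n ih =>
    set p := playFrom (copCM hT m) RM (fun _ => m) r0 n with hp
    have hv := RM.valid n p.1 p.2
    have hstep := shadow_step hT m n (r := p.2) (r' := RM.move n p.1 p.2) (by tauto)
    rw [← ih] at hstep
    show (copCM hT m).move n p.1 (RM.move n p.1 p.2) i = _
    dsimp only [copCM]
    rw [if_pos (by tauto)]
    rfl

lemma copsWinIn_of_center (hT : T.IsTree) {m : V} {B : ℕ}
    (hm : ∀ w, T.dist m w ≤ B) : CopsWinIn T 1 B := by
  refine ⟨fun _ => m, copCM hT m, fun r0 RM => ⟨B, le_rfl, 0, ?_⟩⟩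
  rw [cop_play hT m RM r0 B 0]
  exact shadow_capture hT (hm _)

lemma dist_getVert_le (hconn : T.Connected) {u v : V} (p : T.Walk u v) (j : ℕ) :
    T.dist u (p.getVert j) ≤ j := by
  induction j with
  | zero => simp [Walk.getVert_zero]
  | succ j ih =>
    by_cases hj : j < p.length
    · have hadj := p.adj_getVert_succ hj
      have := hconn.dist_triangle (u := u) (v := p.getVert j) (w := p.getVert (j + 1))
      have h1 : T.dist (p.getVert j) (p.getVert (j + 1)) = 1 :=
        SimpleGraph.dist_eq_one_iff_adj.mpr hadj
      omega
    · rw [Walk.getVert_of_length_le p (by omega), ← Walk.getVert_of_length_le p (le_refl p.length)]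
      have := ih
      rw [Walk.getVert_of_length_le p (le_refl p.length)] at *
      by_cases hj' : p.length ≤ j
      · rw [Walk.getVert_of_length_le p hj'] at ih; omega
      · omega

lemma exists_center (hT : T.IsTree) (hE : ∃ x y, T.Adj x y) :
    ∃ m : V, ∀ w, T.dist m w ≤ (T.diam + 1) / 2 := by
  obtain ⟨x, y, hxy⟩ := hE
  have hconn := hT.isConnected
  haveI : Nonempty V := ⟨x⟩
  have hne : T.ediam ≠ ⊤ := by
    obtain ⟨q, hq⟩ := Finite.exists_max (fun q : V × V => T.edist q.1 q.2)
    have h1 : T.ediam ≤ T.edist q.1 q.2 := by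
      rw [SimpleGraph.ediam_def]
      exact iSup_le hq
    exact ne_top_of_le_ne_top (SimpleGraph.edist_ne_top_iff_reachable.mpr (hconn q.1 q.2)) h1
  have hdle : ∀ u v : V, T.dist u v ≤ T.diam := fun u v => SimpleGraph.dist_le_diam hne
  obtain ⟨u, v, huv⟩ := SimpleGraph.exists_dist_eq_diam (G := T)
  set D := T.diam with hD
  have hD1 : 1 ≤ D := by
    have h1 : T.dist x y = 1 := SimpleGraph.dist_eq_one_iff_adj.mpr hxy
    have := hdle x y
    omega
  set j := (D + 1) / 2 with hj
  have hjD : j ≤ D := by omega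
  set p := tpath hT u v with hp
  have hplen : p.length = D := by rw [hp, tpath_length, huv]
  set m := p.getVert j with hm
  have hmsup : m ∈ p.support :=
    Walk.mem_support_iff_exists_getVert.mpr ⟨j, rfl, by omega⟩
  have hum : T.dist u m ≤ j := dist_getVert_le hconn p j
  have hmv : T.dist m v ≤ D - j := by
    have h1 : p.reverse.getVert (D - j) = m := by
      rw [Walk.getVert_reverse, hplen]
      congr 1
      omega
    have h2 := dist_getVert_le hconn p.reverse (D - j)
    rw [h1] at h2
    rw [SimpleGraph.dist_comm]
    exact h2
  have hsum : T.dist u m + T.dist m v = D := by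
    rw [← huv]
    exact dist_add_of_mem_tpath hT hmsup
  have hum' : T.dist u m = j := by omega
  have hmv' : T.dist m v = D - j := by omega
  refine ⟨m, fun w => ?_⟩
  have hw : m ∈ (tpath hT u w).support ∨ m ∈ (tpath hT w v).support := by
    have hb : ((tpath hT u w).append (tpath hT w v)).bypass = p :=
      (tpath_eq hT _ ((tpath hT u w).append (tpath hT w v)).bypass_isPath)
    have h1 : m ∈ ((tpath hT u w).append (tpath hT w v)).support :=
      Walk.support_bypass_subset _ (hb ▸ hmsup)
    exact (Walk.mem_support_append_iff _ _).mp h1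
  rcases hw with hw | hw
  · have h1 := dist_add_of_mem_tpath hT hw
    have h2 := hdle u w
    rw [SimpleGraph.dist_comm (u := m) (v := w)] at h1 ⊢
    omega
  · have h1 := dist_add_of_mem_tpath hT hw
    have h2 := hdle w v
    have h3 : T.dist w m = T.dist m w := SimpleGraph.dist_comm
    omega

/-- The robber strategy of never moving. -/
def stayRM (k : ℕ) : RobberMoves T k := ⟨fun _ _ r => r, fun _ _ _ => Or.inl rfl⟩

lemma stay_pos {k : ℕ} (CM : CopMoves T k) (c0 : Fin k → V) (r0 : V) (n : ℕ) :
    (playFrom CM (stayRM k) c0 r0 n).2 = r0 := by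
  induction n with
  | zero => rfl
  | succ n ih => exact ih

lemma cop_disp (hconn : T.Connected) {k : ℕ} (CM : CopMoves T k) (RM : RobberMoves T k)
    (c0 : Fin k → V) (r0 : V) (n : ℕ) (i : Fin k) :
    T.dist (c0 i) ((playFrom CM RM c0 r0 n).1 i) ≤ n := by
  induction n with
  | zero => simp [playFrom]
  | succ n ih =>
    set p := playFrom CM RM c0 r0 n with hp
    set r' := RM.move n p.1 p.2 with hr'
    have hv := CM.valid n p.1 r' i
    have htri := hconn.dist_triangle (u := c0 i) (v := p.1 i) (w := CM.move n p.1 r' i)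
    have hlast : T.dist (p.1 i) (CM.move n p.1 r' i) ≤ 1 := by
      rcases hv with hv | hv
      · rw [hv, SimpleGraph.dist_self]; omega
      · rw [SimpleGraph.dist_eq_one_iff_adj.mpr hv]
    show T.dist (c0 i) (CM.move n p.1 r' i) ≤ n + 1
    omega

lemma lower_bound (hT : T.IsTree) (hE : ∃ x y, T.Adj x y) (t : ℕ)
    (hwin : CopsWinIn T 1 t) : (T.diam + 1) / 2 ≤ t := by
  obtain ⟨x, y, hxy⟩ := hE
  have hconn := hT.isConnected
  haveI : Nonempty V := ⟨x⟩
  obtain ⟨u, v, huv⟩ := SimpleGraph.exists_dist_eq_diam (G := T)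
  obtain ⟨c0, CM, hwin⟩ := hwin
  have hfar : ∃ r0 : V, (T.diam + 1) / 2 ≤ T.dist (c0 0) r0 := by
    have htri := hconn.dist_triangle (u := u) (v := c0 0) (w := v)
    have h1 : T.dist u (c0 0) = T.dist (c0 0) u := SimpleGraph.dist_comm
    by_cases hcase : (T.diam + 1) / 2 ≤ T.dist (c0 0) u
    · exact ⟨u, hcase⟩
    · exact ⟨v, by omega⟩
  obtain ⟨r0, hr0⟩ := hfar
  obtain ⟨n, hn, i, hcap⟩ := hwin r0 (stayRM 1)
  rw [stay_pos] at hcap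
  have hd := cop_disp hconn CM (stayRM 1) c0 r0 n i
  rw [hcap] at hd
  have hi : i = 0 := Subsingleton.elim i 0
  rw [hi] at hd
  omega

end CaptureAux

/-- For a finite tree `T` with at least one edge, the 1-capture
time of `T` equals `⌈diam(T)/2⌉`. -/
theorem capture_time_of_tree {V : Type u} [Fintype V] (T : SimpleGraph V)
    (hT : T.IsTree) (hE : ∃ x y, T.Adj x y) :
    captTime T 1 = (T.diam + 1) / 2 := by
  obtain ⟨m, hm⟩ := exists_center hT hE
  have hupper : CopsWinIn T 1 ((T.diam + 1) / 2) := copsWinIn_of_center hT hm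
  refine le_antisymm (Nat.sInf_le hupper) ?_
  exact lower_bound hT hE _ (Nat.sInf_mem (s := {t | CopsWinIn T 1 t}) ⟨_, hupper⟩)
end

section
/- Let T1 and T2 be finite rooted trees, and consider the Cops and Robber game with two cops on the Cartesian product T1 □ T2, with cop C1 at (u1,u2), cop C2 at (v1,v2), and the robber at (r1,r2). Suppose that: (i) for i = 1,2, the vertex r_i is a descendant of u_i and of v_i; (ii) d(v1,r1) = 1 + d(u1,r1); (iii) u2 = v2; and (iv) d(u2,r2) ∈ {d(u1,r1), d(v1,r1)}. If it is the robber's turn to move, then the two cops have a strategy from this configuration that captures the robber within m rounds, where m = ⌊(h(u1) + h(v1) + h(u2) + h(v2))/2⌋. -/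
/-!
Cops and Robber game on a simple graph `G` with `k` cops.
Convention (as in the paper): the cops first choose starting positions, then the
robber chooses a starting position; in every subsequent round the robber moves
first (staying or moving to an adjacent vertex) and then each cop moves
(staying or moving to an adjacent vertex).  The cops win as soon as some cop
occupies the robber's vertex.  Strategies have full information: a move may
depend on the round number and on all current positions.
-/

open SimpleGraph

universe u v w

/-- In the tree `T` rooted at `s`, the vertex `w` is a *descendant* of `v`,
i.e. `v` lies on the unique path from `s` to `w`. -/
def IsTreeDesc {V : Type u} (T : SimpleGraph V) (s v w : V) : Prop :=
  T.dist s w = T.dist s v + T.dist v w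

/-- A leaf of a tree: a vertex with exactly one neighbour. -/
def IsTreeLeaf {V : Type u} (T : SimpleGraph V) (v : V) : Prop :=
  (T.neighborSet v).ncard = 1

/-- The height of `v` in the tree `T` rooted at `s`: the maximum distance from
`v` to a leaf of `T` that is a descendant of `v`. -/
noncomputable def rootedHeight {V : Type u} (T : SimpleGraph V) (s v : V) : ℕ :=
  sSup {d | ∃ l, IsTreeLeaf T l ∧ IsTreeDesc T s v l ∧ T.dist v l = d}

variable {V : Type*} {T : SimpleGraph V}

/-- A walk can be extended by an edge to a path, if its endpoint-extension is new. -/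
lemma isPath_concat {u v w : V} {p : T.Walk u v} (hp : p.IsPath) (h : T.Adj v w)
    (hw : w ∉ p.support) : (p.concat h).IsPath := by
  have : (Walk.cons h.symm p.reverse).IsPath := by
    rw [Walk.cons_isPath_iff]
    exact ⟨hp.reverse, by simpa [Walk.support_reverse] using hw⟩
  have := this.reverse
  rwa [Walk.reverse_cons, Walk.reverse_reverse] at this

/-- On a geodesic, distances decompose. -/
lemma dist_decomp_of_mem_geodesic (hc : T.Connected) {u v y : V} (p : T.Walk u v)
    (hp : p.length = T.dist u v) (hy : y ∈ p.support) :
    T.dist u y + T.dist y v = T.dist u v := by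
  classical
  have h1 : T.dist u y ≤ (p.takeUntil y hy).length := T.dist_le _
  have h2 : T.dist y v ≤ (p.dropUntil y hy).length := T.dist_le _
  have h3 : (p.takeUntil y hy).length + (p.dropUntil y hy).length = p.length := by
    have := congrArg Walk.length (p.take_spec hy)
    rw [Walk.length_append] at this
    omega
  have h4 := hc.dist_triangle (u := u) (v := y) (w := v)
  omega

/-- In a tree, two adjacent vertices have different distances to `s`. -/
lemma tree_adj_dist_ne (hT : T.IsTree) (s : V) {x y : V} (h : T.Adj x y) :
    T.dist s x ≠ T.dist s y := by
  intro he
  have hc := hT.isConnected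
  obtain ⟨p, hp, hpl⟩ := (hc s x).exists_path_of_dist
  obtain ⟨q, hq, hql⟩ := (hc s y).exists_path_of_dist
  have hy : y ∉ p.support := by
    intro hy
    have := dist_decomp_of_mem_geodesic hc p hpl hy
    have : T.dist y x = 0 := by omega
    have := (hc y x).dist_eq_zero_iff.mp this
    exact h.ne this.symm
  have hcp : (p.concat h).IsPath := isPath_concat hp h hy
  have := (hT.existsUnique_path s y).unique hcp hq
  have hlen : (p.concat h).length = q.length := by rw [this]
  rw [Walk.length_concat, hpl, hql] at hlen
  omega

/-- In a tree, the parent is unique: two neighbours of `r` strictly closer to `s` coincide. -/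
lemma tree_parent_unique (hT : T.IsTree) (s : V) {x y r : V} (hx : T.Adj x r) (hy : T.Adj y r)
    (hdx : T.dist s x + 1 = T.dist s r) (hdy : T.dist s y + 1 = T.dist s r) : x = y := by
  have hc := hT.isConnected
  obtain ⟨p, hp, hpl⟩ := (hc s x).exists_path_of_dist
  obtain ⟨q, hq, hql⟩ := (hc s y).exists_path_of_dist
  have hrp : r ∉ p.support := by
    intro hr
    have := dist_decomp_of_mem_geodesic hc p hpl hr
    omega
  have hrq : r ∉ q.support := by
    intro hr
    have := dist_decomp_of_mem_geodesic hc q hql hr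
    omega
  have h1 : (p.concat hx).IsPath := isPath_concat hp hx hrp
  have h2 : (q.concat hy).IsPath := isPath_concat hq hy hrq
  have := (hT.existsUnique_path s r).unique h1 h2
  obtain ⟨hv, -⟩ := Walk.concat_inj this
  exact hv


lemma exists_child_toward (hT : T.IsTree) (s : V) {x y : V}
    (hdesc : T.dist s y = T.dist s x + T.dist x y) (hxy : T.dist x y ≠ 0) :
    ∃ c, T.Adj x c ∧ T.dist c y + 1 = T.dist x y ∧ T.dist s c = T.dist s x + 1 ∧
      T.dist s y = T.dist s c + T.dist c y := by
  have hc := hT.isConnected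
  obtain ⟨p, hpl⟩ := (hc x y).exists_walk_length_eq_dist
  cases p with
  | nil => simp at hpl; omega
  | @cons _ c _ h q =>
    rw [Walk.length_cons] at hpl
    have hcy : T.dist c y ≤ q.length := T.dist_le q
    have htri : T.dist x y ≤ T.dist x c + T.dist c y := hc.dist_triangle
    have hxc : T.dist x c = 1 := dist_eq_one_iff_adj.mpr h
    have h1 : T.dist s c ≤ T.dist s x + T.dist x c := hc.dist_triangle
    have h2 : T.dist s y ≤ T.dist s c + T.dist c y := hc.dist_triangle
    exact ⟨c, h, by omega, by omega, by omega⟩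

lemma exists_parent_toward (hT : T.IsTree) (s : V) {u r : V}
    (hdesc : T.dist s r = T.dist s u + T.dist u r) (hur : T.dist u r ≠ 0) :
    ∃ p, T.Adj p r ∧ T.dist u p + 1 = T.dist u r ∧ T.dist s p + 1 = T.dist s r ∧
      T.dist s p = T.dist s u + T.dist u p := by
  have hc := hT.isConnected
  obtain ⟨w, hwl⟩ := (hc r u).exists_walk_length_eq_dist
  cases w with
  | nil => rw [T.dist_comm] at hur; simp at hwl; omega
  | @cons _ p _ h q =>
    rw [Walk.length_cons] at hwl
    have hpu : T.dist p u ≤ q.length := T.dist_le q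
    have hru : T.dist r u = T.dist u r := T.dist_comm
    have hup : T.dist u p = T.dist p u := T.dist_comm
    have htri : T.dist u r ≤ T.dist u p + T.dist p r := hc.dist_triangle
    have hpr : T.dist p r = 1 := dist_eq_one_iff_adj.mpr h.symm
    have h1 : T.dist s p ≤ T.dist s u + T.dist u p := hc.dist_triangle
    have h2 : T.dist s r ≤ T.dist s p + T.dist p r := hc.dist_triangle
    exact ⟨p, h.symm, by omega, by omega, by omega⟩

lemma desc_step_up (hc : T.Connected) {s u r r' : V}
    (hdesc : T.dist s r = T.dist s u + T.dist u r) (h : T.Adj r r')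
    (hup : T.dist s r' = T.dist s r + 1) :
    T.dist s r' = T.dist s u + T.dist u r' ∧ T.dist u r' = T.dist u r + 1 := by
  have h1 : T.dist u r' ≤ T.dist u r + T.dist r r' := hc.dist_triangle
  have h2 : T.dist s r' ≤ T.dist s u + T.dist u r' := hc.dist_triangle
  have h3 : T.dist r r' = 1 := dist_eq_one_iff_adj.mpr h
  constructor <;> omega

lemma desc_step_down (hT : T.IsTree) {s u r r' : V}
    (hdesc : T.dist s r = T.dist s u + T.dist u r) (h : T.Adj r r')
    (hdn : T.dist s r' + 1 = T.dist s r) (hur : T.dist u r ≠ 0) :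
    T.dist s r' = T.dist s u + T.dist u r' ∧ T.dist u r' + 1 = T.dist u r := by
  obtain ⟨p, hpr, hpu, hps, hpd⟩ := exists_parent_toward hT s hdesc hur
  have : r' = p := tree_parent_unique hT s h.symm hpr (by omega) (by omega)
  subst this
  exact ⟨by omega, by omega⟩

lemma desc_trans (hc : T.Connected) {s x c l : V}
    (h1 : T.dist s c = T.dist s x + T.dist x c) (h2 : T.dist s l = T.dist s c + T.dist c l) :
    T.dist s l = T.dist s x + T.dist x l ∧ T.dist x l = T.dist x c + T.dist c l := by
  have t1 : T.dist x l ≤ T.dist x c + T.dist c l := hc.dist_triangle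
  have t2 : T.dist s l ≤ T.dist s x + T.dist x l := hc.dist_triangle
  constructor <;> omega

lemma exists_leaf_desc [Fintype V] (hT : T.IsTree) (s : V) {v w : V}
    (hdesc : IsTreeDesc T s v w) (hpos : 1 ≤ T.dist s v + T.dist v w) :
    ∃ l, IsTreeLeaf T l ∧ IsTreeDesc T s v l ∧ T.dist v w ≤ T.dist v l := by
  classical
  have hc := hT.isConnected
  set S : Set V := {l | T.dist s l = T.dist s v + T.dist v l} with hS
  have hw : w ∈ S := hdesc
  obtain ⟨l, hlS, hmax⟩ := Set.Finite.exists_maximalFor (T.dist v) S (Set.toFinite S) ⟨w, hw⟩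
  have hml : ∀ l' ∈ S, T.dist v l' ≤ T.dist v l := by
    intro l' h'
    rcases le_or_gt (T.dist v l') (T.dist v l) with h | h
    · exact h
    · have := hmax h' (le_of_lt h); omega
  have hvwl : T.dist v w ≤ T.dist v l := hml w hw
  have hlSd : T.dist s l = T.dist s v + T.dist v l := hlS
  have hsl : T.dist s l ≠ 0 := by omega
  have hself : T.dist s l = T.dist s s + T.dist s l := by rw [T.dist_self]; omega
  obtain ⟨p, hpadj, -, hps, -⟩ := exists_parent_toward hT s hself hsl
  have hnbr : ∀ x, T.Adj l x → x = p := by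
    intro x hx
    have hne := tree_adj_dist_ne hT s hx
    have t1 : T.dist s x ≤ T.dist s l + T.dist l x := hc.dist_triangle
    have t2 : T.dist s l ≤ T.dist s x + T.dist x l := hc.dist_triangle
    have t3 : T.dist l x = 1 := dist_eq_one_iff_adj.mpr hx
    have t4 : T.dist x l = 1 := dist_eq_one_iff_adj.mpr hx.symm
    have : T.dist s x = T.dist s l + 1 ∨ T.dist s x + 1 = T.dist s l := by omega
    rcases this with hup | hdn
    · exfalso
      have := desc_step_up hc hlSd hx hup
      have hxS : x ∈ S := this.1
      have := hml x hxS
      omega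
    · exact tree_parent_unique hT s hx.symm hpadj hdn (by omega)
  have hnb : T.neighborSet l = {p} := by
    ext x
    simp only [mem_neighborSet, Set.mem_singleton_iff]
    exact ⟨fun hx => hnbr x hx, fun hx => by subst hx; exact hpadj.symm⟩
  refine ⟨l, ?_, hlS, hvwl⟩
  rw [IsTreeLeaf, hnb, Set.ncard_singleton]

lemma bddAbove_heightSet [Fintype V] (T : SimpleGraph V) (s v : V) :
    BddAbove {d | ∃ l, IsTreeLeaf T l ∧ IsTreeDesc T s v l ∧ T.dist v l = d} := by
  apply Set.Finite.bddAbove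
  apply Set.Finite.subset (Set.finite_range (T.dist v))
  rintro d ⟨l, -, -, rfl⟩
  exact ⟨l, rfl⟩

lemma height_ge [Fintype V] (hT : T.IsTree) (s : V) {v w : V}
    (hdesc : IsTreeDesc T s v w) (hpos : 1 ≤ T.dist s v + T.dist v w) :
    T.dist v w ≤ rootedHeight T s v := by
  obtain ⟨l, hl, hdl, hle⟩ := exists_leaf_desc hT s hdesc hpos
  exact le_trans hle (le_csSup (bddAbove_heightSet T s v) ⟨l, hl, hdl, rfl⟩)

lemma height_child_lt [Fintype V] (hT : T.IsTree) (s : V) {x c : V}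
    (hadj : T.Adj x c) (hsc : T.dist s c = T.dist s x + 1) :
    rootedHeight T s c + 1 ≤ rootedHeight T s x := by
  have hxc1 : T.dist x c = 1 := dist_eq_one_iff_adj.mpr hadj
  have hdxc : T.dist s c = T.dist s x + T.dist x c := by omega
  have hde : IsTreeDesc T s c c := by simp [IsTreeDesc, T.dist_self]
  obtain ⟨l0, hl0, hd0, -⟩ := exists_leaf_desc hT s hde
    (by rw [T.dist_self]; omega)
  have hne : {d | ∃ l, IsTreeLeaf T l ∧ IsTreeDesc T s c l ∧ T.dist c l = d}.Nonempty :=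
    ⟨_, l0, hl0, hd0, rfl⟩
  have hmem := Nat.sSup_mem hne (bddAbove_heightSet T s c)
  obtain ⟨l, hl, hdl, hdist⟩ := hmem
  have ht := desc_trans hT.isConnected hdxc hdl
  refine le_csSup (bddAbove_heightSet T s x) ⟨l, hl, ht.1, ?_⟩
  rw [rootedHeight, ← hdist]
  omega
section Game

open scoped Classical

/-- Move one step from `x` towards `r`, descending in the tree rooted at `s`
(or stay put if no suitable step exists). -/
noncomputable def downStep {V : Type*} (T : SimpleGraph V) (s x r : V) : V :=
  if h : ∃ c, T.Adj x c ∧ T.dist c r + 1 = T.dist x r ∧ T.dist s c = T.dist s x + 1 ∧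
      T.dist s r = T.dist s c + T.dist c r then h.choose else x

lemma downStep_valid {V : Type*} (T : SimpleGraph V) (s x r : V) :
    downStep T s x r = x ∨ T.Adj x (downStep T s x r) := by
  unfold downStep
  split
  · rename_i h
    exact Or.inr h.choose_spec.1
  · exact Or.inl rfl

lemma downStep_spec {V : Type*} {T : SimpleGraph V} (hT : T.IsTree) {s x r : V}
    (hdesc : T.dist s r = T.dist s x + T.dist x r) (h0 : T.dist x r ≠ 0) :
    T.Adj x (downStep T s x r) ∧ T.dist (downStep T s x r) r + 1 = T.dist x r ∧
      T.dist s (downStep T s x r) = T.dist s x + 1 ∧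
      T.dist s r = T.dist s (downStep T s x r) + T.dist (downStep T s x r) r := by
  have hex := exists_child_toward hT s hdesc h0
  rw [downStep, dif_pos hex]
  exact hex.choose_spec

variable {V1 : Type u} {V2 : Type v}

/-- Shift a robber strategy by one round. -/
def shiftRM {V : Type*} {G : SimpleGraph V} {k : ℕ} (RM : RobberMoves G k) : RobberMoves G k :=
  ⟨fun n => RM.move (n + 1), fun n => RM.valid (n + 1)⟩

lemma playFrom_succ_eq {V : Type*} {G : SimpleGraph V} {k : ℕ} (CM : CopMoves G k)
    (hst : ∀ n c r, CM.move n c r = CM.move 0 c r) (RM : RobberMoves G k)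
    (c0 : Fin k → V) (r0 : V) (n : ℕ) :
    playFrom CM RM c0 r0 (n + 1) =
      playFrom CM (shiftRM RM) (CM.move 0 c0 (RM.move 0 c0 r0)) (RM.move 0 c0 r0) n := by
  induction n with
  | zero => rfl
  | succ n ih =>
    show (CM.move (n+1) (playFrom CM RM c0 r0 (n+1)).1 _, _) = (CM.move n _ _, _)
    rw [ih, hst (n+1), hst n]
    rfl

lemma capturedIn_succ {V : Type*} {G : SimpleGraph V} {k : ℕ} (CM : CopMoves G k)
    (hst : ∀ n c r, CM.move n c r = CM.move 0 c r) (RM : RobberMoves G k)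
    (c0 : Fin k → V) (r0 : V) (t : ℕ)
    (h : CapturedIn CM (shiftRM RM) (CM.move 0 c0 (RM.move 0 c0 r0)) (RM.move 0 c0 r0) t) :
    CapturedIn CM RM c0 r0 (t + 1) := by
  obtain ⟨n, hn, i, hi⟩ := h
  exact ⟨n + 1, by omega, i, by rw [playFrom_succ_eq CM hst]; exact hi⟩

end Game
section Main

open scoped Classical

variable {V1 : Type u} {V2 : Type v}

/-- The response function of the two cops. -/
noncomputable def copMoveFun (T1 : SimpleGraph V1) (T2 : SimpleGraph V2) (s1 : V1) (s2 : V2)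
    (c : Fin 2 → V1 × V2) (r : V1 × V2) (i : Fin 2) : V1 × V2 :=
  if c i = r ∨ (T1 □ T2).Adj (c i) r then r
  else if T2.dist (c 0).2 r.2 ≤ T1.dist (c 0).1 r.1 then
    (downStep T1 s1 (c i).1 r.1, (c i).2)
  else ((c i).1, downStep T2 s2 (c i).2 r.2)

/-- The two-cop strategy on the product of two rooted trees. -/
noncomputable def copStrat (T1 : SimpleGraph V1) (T2 : SimpleGraph V2) (s1 : V1) (s2 : V2) :
    CopMoves (T1 □ T2) 2 where
  move := fun _ => copMoveFun T1 T2 s1 s2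
  valid := by
    intro n c r i
    simp only [copMoveFun]
    split
    · rename_i h
      exact h.imp Eq.symm id
    · split
      · rcases downStep_valid T1 s1 (c i).1 r.1 with h | h
        · left; rw [h]
        · right
          exact SimpleGraph.boxProd_adj.mpr (Or.inl ⟨h, rfl⟩)
      · rcases downStep_valid T2 s2 (c i).2 r.2 with h | h
        · left; rw [h]
        · right
          exact SimpleGraph.boxProd_adj.mpr (Or.inr ⟨h, rfl⟩)

/-- The mid-game invariant. -/
def GameInv (T1 : SimpleGraph V1) (T2 : SimpleGraph V2) (s1 : V1) (s2 : V2)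
    (u1 v1 r1 : V1) (w r2 : V2) : Prop :=
  IsTreeDesc T1 s1 u1 r1 ∧ IsTreeDesc T1 s1 v1 r1 ∧ IsTreeDesc T2 s2 w r2 ∧
    T1.dist v1 r1 = T1.dist u1 r1 + 1 ∧
    (T2.dist w r2 = T1.dist u1 r1 ∨ T2.dist w r2 = T1.dist u1 r1 + 1)

lemma step_lemma [Fintype V1] [Fintype V2] {T1 : SimpleGraph V1} {T2 : SimpleGraph V2}
    (hT1 : T1.IsTree) (hT2 : T2.IsTree) (s1 : V1) (s2 : V2)
    {u1 v1 r1 : V1} {w r2 : V2} {r' : V1 × V2}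
    (hd1 : IsTreeDesc T1 s1 u1 r1) (hd2 : IsTreeDesc T1 s1 v1 r1)
    (hd3 : IsTreeDesc T2 s2 w r2)
    (hv : T1.dist v1 r1 = T1.dist u1 r1 + 1)
    (hb : T2.dist w r2 = T1.dist u1 r1 ∨ T2.dist w r2 = T1.dist u1 r1 + 1)
    (hrv : r' = (r1, r2) ∨ (T1 □ T2).Adj (r1, r2) r')
    (hc : ∀ i : Fin 2, ¬(![(u1,w),(v1,w)] i = r' ∨ (T1 □ T2).Adj (![(u1,w),(v1,w)] i) r')) :
    ∃ u1' v1' w',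
      (∀ i, copMoveFun T1 T2 s1 s2 ![(u1,w),(v1,w)] r' i = ![(u1',w'),(v1',w')] i) ∧
      GameInv T1 T2 s1 s2 u1' v1' r'.1 w' r'.2 ∧
      rootedHeight T1 s1 u1' + rootedHeight T1 s1 v1' + 2 * rootedHeight T2 s2 w' + 2 ≤
        rootedHeight T1 s1 u1 + rootedHeight T1 s1 v1 + 2 * rootedHeight T2 s2 w := by
  obtain ⟨x, y⟩ := r'
  dsimp only
  have hc1 := hT1.isConnected
  have hc2 := hT2.isConnected
  have hcu : ¬(((u1, w) : V1 × V2) = (x, y) ∨ (T1 □ T2).Adj (u1, w) (x, y)) := by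
    simpa using hc 0
  have hcv : ¬(((v1, w) : V1 × V2) = (x, y) ∨ (T1 □ T2).Adj (v1, w) (x, y)) := by
    simpa using hc 1
  have key : T1.dist s1 x = T1.dist s1 u1 + T1.dist u1 x ∧
      T1.dist s1 x = T1.dist s1 v1 + T1.dist v1 x ∧
      T2.dist s2 y = T2.dist s2 w + T2.dist w y ∧
      T1.dist v1 x = T1.dist u1 x + 1 ∧
      (T2.dist w y ≤ T1.dist u1 x →
        T2.dist w y = T1.dist u1 x ∨ T2.dist w y + 1 = T1.dist u1 x) ∧
      (T1.dist u1 x < T2.dist w y →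
        T2.dist w y = T1.dist u1 x + 1 ∨ T2.dist w y = T1.dist u1 x + 2) := by
    rcases hrv with he | hadj
    · rw [Prod.mk.injEq] at he
      obtain ⟨hx, hy⟩ := he
      subst hx; subst hy
      exact ⟨hd1, hd2, hd3, hv, fun _ => by omega, fun _ => by omega⟩
    · rw [SimpleGraph.boxProd_adj] at hadj
      rcases hadj with ⟨hA, hy⟩ | ⟨hA, hx⟩
      · -- the robber moved in the first coordinate
        dsimp only at hA hy
        subst hy
        have hne := tree_adj_dist_ne hT1 s1 hA
        have hd1x : T1.dist r1 x = 1 := SimpleGraph.dist_eq_one_iff_adj.mpr hA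
        have t1 : T1.dist s1 x ≤ T1.dist s1 r1 + T1.dist r1 x := hc1.dist_triangle
        have t2 : T1.dist s1 r1 ≤ T1.dist s1 x + T1.dist x r1 := hc1.dist_triangle
        have hd1x' : T1.dist x r1 = 1 := by rw [T1.dist_comm]; exact hd1x
        have hcase : T1.dist s1 x = T1.dist s1 r1 + 1 ∨ T1.dist s1 x + 1 = T1.dist s1 r1 := by
          omega
        rcases hcase with hup | hdn
        · have k1 := desc_step_up hc1 hd1 hA hup
          have k2 := desc_step_up hc1 hd2 hA hup
          exact ⟨k1.1, k2.1, hd3, by omega, by omega, by omega⟩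
        · by_cases ha0 : T1.dist u1 r1 = 0
          · exfalso
            have k2 := desc_step_down hT1 hd2 hA hdn (by omega)
            have hvx : v1 = x := hc1.dist_eq_zero_iff.mp (by omega)
            rcases (show T2.dist w r2 = 0 ∨ T2.dist w r2 = 1 by omega) with h0 | h1
            · exact hcv (Or.inl (by rw [hvx, hc2.dist_eq_zero_iff.mp h0]))
            · exact hcv (Or.inr (SimpleGraph.boxProd_adj.mpr
                (Or.inr ⟨SimpleGraph.dist_eq_one_iff_adj.mp h1, hvx⟩)))
          · have k1 := desc_step_down hT1 hd1 hA hdn ha0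
            have k2 := desc_step_down hT1 hd2 hA hdn (by omega)
            exact ⟨k1.1, k2.1, hd3, by omega, by omega, by omega⟩
      · -- the robber moved in the second coordinate
        dsimp only at hA hx
        subst hx
        have hne := tree_adj_dist_ne hT2 s2 hA
        have hd2y : T2.dist r2 y = 1 := SimpleGraph.dist_eq_one_iff_adj.mpr hA
        have t1 : T2.dist s2 y ≤ T2.dist s2 r2 + T2.dist r2 y := hc2.dist_triangle
        have t2 : T2.dist s2 r2 ≤ T2.dist s2 y + T2.dist y r2 := hc2.dist_triangle
        have hd2y' : T2.dist y r2 = 1 := by rw [T2.dist_comm]; exact hd2y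
        have hcase : T2.dist s2 y = T2.dist s2 r2 + 1 ∨ T2.dist s2 y + 1 = T2.dist s2 r2 := by
          omega
        rcases hcase with hup | hdn
        · have k3 := desc_step_up hc2 hd3 hA hup
          exact ⟨hd1, hd2, k3.1, by omega, by omega, by omega⟩
        · by_cases hb0 : T2.dist w r2 = 0
          · exfalso
            have ha0 : T1.dist u1 r1 = 0 := by omega
            refine hcu (Or.inr ?_)
            rw [hc1.dist_eq_zero_iff.mp ha0, hc2.dist_eq_zero_iff.mp hb0]
            exact SimpleGraph.boxProd_adj.mpr (Or.inr ⟨hA, rfl⟩)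
          · have k3 := desc_step_down hT2 hd3 hA hdn hb0
            exact ⟨hd1, hd2, k3.1, by omega, by omega, by omega⟩
  obtain ⟨k1, k2, k3, k4, k5, k6⟩ := key
  by_cases hbr : T2.dist w y ≤ T1.dist u1 x
  · -- both cops descend in the first coordinate
    have hA0 : T1.dist u1 x ≠ 0 := by
      intro h0
      have hB0 : T2.dist w y = 0 := by omega
      exact hcu (Or.inl (by rw [hc1.dist_eq_zero_iff.mp h0, hc2.dist_eq_zero_iff.mp hB0]))
    have su := downStep_spec hT1 k1 hA0
    have sv := downStep_spec hT1 k2 (by omega)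
    refine ⟨downStep T1 s1 u1 x, downStep T1 s1 v1 x, w, ?_, ?_, ?_⟩
    · intro i
      fin_cases i <;>
        simp only [copMoveFun, Matrix.cons_val_zero, Matrix.cons_val_one, Matrix.head_cons,
          Fin.isValue, Fin.zero_eta, Fin.mk_one]
      · exact (if_neg hcu).trans (if_pos hbr)
      · exact (if_neg hcv).trans (if_pos hbr)
    · exact ⟨su.2.2.2, sv.2.2.2, k3, by omega, by omega⟩
    · have h1 := height_child_lt hT1 s1 su.1 su.2.2.1
      have h2 := height_child_lt hT1 s1 sv.1 sv.2.2.1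
      omega
  · -- both cops descend in the second coordinate
    have hB0 : T2.dist w y ≠ 0 := by omega
    have sw := downStep_spec hT2 k3 hB0
    refine ⟨u1, v1, downStep T2 s2 w y, ?_, ?_, ?_⟩
    · intro i
      fin_cases i <;>
        simp only [copMoveFun, Matrix.cons_val_zero, Matrix.cons_val_one, Matrix.head_cons,
          Fin.isValue, Fin.zero_eta, Fin.mk_one]
      · exact (if_neg hcu).trans (if_neg hbr)
      · exact (if_neg hcv).trans (if_neg hbr)
    · have := k6 (by omega)
      exact ⟨k1, k2, sw.2.2.2, k4, by omega⟩
    · have h1 := height_child_lt hT2 s2 sw.1 sw.2.2.1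
      omega


lemma main_capture [Fintype V1] [Fintype V2] {T1 : SimpleGraph V1} {T2 : SimpleGraph V2}
    (hT1 : T1.IsTree) (hT2 : T2.IsTree) (s1 : V1) (s2 : V2) :
    ∀ (t : ℕ) (u1 v1 r1 : V1) (w r2 : V2), GameInv T1 T2 s1 s2 u1 v1 r1 w r2 →
      rootedHeight T1 s1 u1 + rootedHeight T1 s1 v1 + 2 * rootedHeight T2 s2 w ≤ 2 * t + 1 →
      ∀ RM : RobberMoves (T1 □ T2) 2,
        CapturedIn (copStrat T1 T2 s1 s2) RM ![(u1, w), (v1, w)] (r1, r2) t := by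
  intro t
  have hc1 := hT1.isConnected
  have hc2 := hT2.isConnected
  induction t with
  | zero =>
    intro u1 v1 r1 w r2 hInv hP RM
    obtain ⟨hd1, hd2, hd3, hv, hb⟩ := hInv
    by_cases hcap : u1 = r1 ∧ w = r2
    · exact ⟨0, le_rfl, 0, by simp [playFrom, hcap.1, hcap.2]⟩
    · exfalso
      have hhv : T1.dist v1 r1 ≤ rootedHeight T1 s1 v1 := height_ge hT1 s1 hd2 (by omega)
      by_cases ha : T1.dist u1 r1 = 0
      · have hu1 : u1 = r1 := hc1.dist_eq_zero_iff.mp ha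
        have hw : w ≠ r2 := fun h => hcap ⟨hu1, h⟩
        have hbne : T2.dist w r2 ≠ 0 := fun h => hw (hc2.dist_eq_zero_iff.mp h)
        have hhw : T2.dist w r2 ≤ rootedHeight T2 s2 w := height_ge hT2 s2 hd3 (by omega)
        omega
      · have hhu : T1.dist u1 r1 ≤ rootedHeight T1 s1 u1 := height_ge hT1 s1 hd1 (by omega)
        omega
  | succ t ih =>
    intro u1 v1 r1 w r2 hInv hP RM
    obtain ⟨hd1, hd2, hd3, hv, hb⟩ := hInv
    by_cases hcap : u1 = r1 ∧ w = r2
    · exact ⟨0, by omega, 0, by simp [playFrom, hcap.1, hcap.2]⟩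
    by_cases hc : ∃ i, ![(u1,w),(v1,w)] i = RM.move 0 ![(u1,w),(v1,w)] (r1, r2) ∨
        (T1 □ T2).Adj (![(u1,w),(v1,w)] i) (RM.move 0 ![(u1,w),(v1,w)] (r1, r2))
    · obtain ⟨i, hi⟩ := hc
      refine ⟨1, by omega, i, ?_⟩
      have h1 : playFrom (copStrat T1 T2 s1 s2) RM ![(u1,w),(v1,w)] (r1, r2) 1 =
          ((copStrat T1 T2 s1 s2).move 0 ![(u1,w),(v1,w)]
            (RM.move 0 ![(u1,w),(v1,w)] (r1, r2)),
            RM.move 0 ![(u1,w),(v1,w)] (r1, r2)) := rfl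
      rw [h1]
      show copMoveFun T1 T2 s1 s2 ![(u1,w),(v1,w)] (RM.move 0 ![(u1,w),(v1,w)] (r1, r2)) i = _
      rw [copMoveFun, if_pos hi]
    · push_neg at hc
      have hc' : ∀ i : Fin 2, ¬(![(u1,w),(v1,w)] i = RM.move 0 ![(u1,w),(v1,w)] (r1, r2) ∨
          (T1 □ T2).Adj (![(u1,w),(v1,w)] i) (RM.move 0 ![(u1,w),(v1,w)] (r1, r2))) := by
        intro i
        rw [not_or]
        exact hc i
      obtain ⟨u1', v1', w', hmv, hInv', hht⟩ :=
        step_lemma hT1 hT2 s1 s2 hd1 hd2 hd3 hv hb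
          (RM.valid 0 ![(u1,w),(v1,w)] (r1, r2)) hc'
      apply capturedIn_succ (copStrat T1 T2 s1 s2) (fun _ _ _ => rfl) RM _ _ t
      have hmove : (copStrat T1 T2 s1 s2).move 0 ![(u1,w),(v1,w)]
          (RM.move 0 ![(u1,w),(v1,w)] (r1, r2)) = ![(u1',w'),(v1',w')] := funext hmv
      rw [hmove]
      exact ih u1' v1' (RM.move 0 ![(u1,w),(v1,w)] (r1, r2)).1 w'
        (RM.move 0 ![(u1,w),(v1,w)] (r1, r2)).2 hInv' (by omega) (shiftRM RM)

end Main
/-- Lemma 1 of the paper.  In the game with two cops on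
`T1 □ T2` (both trees rooted), with cop 1 at `(u1,u2)`, cop 2 at `(v1,v2)` and
the robber at `(r1,r2)`, if `r i` is a descendant of `u i` and of `v i`
(`i = 1,2`), `d(v1,r1) = 1 + d(u1,r1)`, `u2 = v2`, and
`d(u2,r2) ∈ {d(u1,r1), d(v1,r1)}`, then — the robber moving first — the cops
can capture the robber within `⌊(h(u1)+h(v1)+h(u2)+h(v2))/2⌋` rounds. -/
theorem cops_win_from_config {V1 : Type u} {V2 : Type v} [Fintype V1] [Fintype V2]
    (T1 : SimpleGraph V1) (T2 : SimpleGraph V2)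
    (hT1 : T1.IsTree) (hT2 : T2.IsTree) (s1 : V1) (s2 : V2)
    (u1 v1 r1 : V1) (u2 v2 r2 : V2)
    (hdu1 : IsTreeDesc T1 s1 u1 r1) (hdv1 : IsTreeDesc T1 s1 v1 r1)
    (hdu2 : IsTreeDesc T2 s2 u2 r2) (hdv2 : IsTreeDesc T2 s2 v2 r2)
    (h1 : T1.dist v1 r1 = 1 + T1.dist u1 r1)
    (h2 : u2 = v2)
    (h3 : T2.dist u2 r2 = T1.dist u1 r1 ∨ T2.dist u2 r2 = T1.dist v1 r1) :
    CopsWinFrom (T1 □ T2) 2 ![(u1, u2), (v1, v2)] (r1, r2)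
      ((rootedHeight T1 s1 u1 + rootedHeight T1 s1 v1 +
        rootedHeight T2 s2 u2 + rootedHeight T2 s2 v2) / 2) := by
  subst h2
  refine ⟨copStrat T1 T2 s1 s2, fun RM =>
    main_capture hT1 hT2 s1 s2 _ u1 v1 r1 u2 r2 ⟨hdu1, hdv1, hdu2, by omega, by omega⟩ ?_ RM⟩
  omega
end

section
/- Let G be a finite connected 2-cop-win simple graph, and let u be a vertex of G contained in an induced cycle C of length 4 such that for every vertex v of G, |N(v) ∩ V(C)| ≤ 2. If (c1, c2) is a central 2-tuple of G, then d(u,c1) + d(u,c2) ≤ 2·capt_2(G) + 1. -/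
/-!
Cops and Robber game on a simple graph `G` with `k` cops.
Convention (as in the paper): the cops first choose starting positions, then the
robber chooses a starting position; in every subsequent round the robber moves
first (staying or moving to an adjacent vertex) and then each cop moves
(staying or moving to an adjacent vertex).  The cops win as soon as some cop
occupies the robber's vertex.  Strategies have full information: a move may
depend on the round number and on all current positions.
-/

open SimpleGraph

universe u v w

/-- `C` is an induced cycle of length 4 in `G`: four distinct vertices forming a
4-cycle with no chords. -/
def IsInducedC4 {V : Type u} (G : SimpleGraph V) (C : Set V) : Prop :=
  ∃ w0 w1 w2 w3 : V,
    C = {w0, w1, w2, w3} ∧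
    w0 ≠ w1 ∧ w0 ≠ w2 ∧ w0 ≠ w3 ∧ w1 ≠ w2 ∧ w1 ≠ w3 ∧ w2 ≠ w3 ∧
    G.Adj w0 w1 ∧ G.Adj w1 w2 ∧ G.Adj w2 w3 ∧ G.Adj w3 w0 ∧
    ¬ G.Adj w0 w2 ∧ ¬ G.Adj w1 w3

/-- `(c1, c2)` is a central 2-tuple of `G`: starting from these vertices the
two cops can capture the robber within `captTime G 2` rounds. -/
def IsCentralPair {V : Type u} (G : SimpleGraph V) (c1 c2 : V) : Prop :=
  ∃ CM : CopMoves G 2, ∀ (r0 : V) (RM : RobberMoves G 2),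
    CapturedIn CM RM ![c1, c2] r0 (captTime G 2)


/-! ### Auxiliary material for the proof -/

/-- `x` is in the closed neighbourhood of `p`. -/
def Cov {V : Type u} (G : SimpleGraph V) (p x : V) : Prop := x = p ∨ G.Adj p x

lemma dist_le_of_cov {V : Type u} {G : SimpleGraph V} (hconn : G.Connected)
    {p x : V} (h : Cov G p x) (u : V) : G.dist u p ≤ G.dist u x + 1 := by
  rcases h with rfl | h
  · exact Nat.le_succ _
  · have h1 : G.dist x p = 1 := (dist_eq_one_iff_adj).2 h.symm
    have h2 := hconn.dist_triangle (u := u) (v := x) (w := p)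
    omega

lemma dist_le_one_of_cov {V : Type u} {G : SimpleGraph V}
    {p x : V} (h : Cov G p x) : G.dist x p ≤ 1 := by
  rcases h with rfl | h
  · simp [SimpleGraph.dist_self]
  · exact le_of_eq ((dist_eq_one_iff_adj).2 h.symm)

open Classical in
/-- The robber's evasion strategy on the induced 4-cycle `C`:  stay put if the
current position is not in the closed neighbourhood of either cop; otherwise
move to a vertex of `C` (reachable in one step) outside both closed
neighbourhoods, if one exists. -/
noncomputable def robberStrat {V : Type u} (G : SimpleGraph V) (C : Set V) :
    RobberMoves G 2 where
  move _ p r :=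
    if ¬ Cov G (p 0) r ∧ ¬ Cov G (p 1) r then r
    else if h : ∃ x, (x = r ∨ G.Adj r x) ∧ x ∈ C ∧ ¬ Cov G (p 0) x ∧ ¬ Cov G (p 1) x
      then h.choose else r
  valid := by
    intro n p r
    split_ifs with h1 h2
    · exact Or.inl rfl
    · exact h2.choose_spec.1
    · exact Or.inl rfl

open Classical in
lemma robberStrat_spec {V : Type u} (G : SimpleGraph V) (C : Set V)
    (n : ℕ) (p : Fin 2 → V) (r : V) (hrC : r ∈ C)
    (h : ∃ x, (x = r ∨ G.Adj r x) ∧ x ∈ C ∧ ¬ Cov G (p 0) x ∧ ¬ Cov G (p 1) x) :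
    (robberStrat G C).move n p r ∈ C ∧
      ¬ Cov G (p 0) ((robberStrat G C).move n p r) ∧
      ¬ Cov G (p 1) ((robberStrat G C).move n p r) := by
  unfold robberStrat
  dsimp only
  by_cases h1 : ¬ Cov G (p 0) r ∧ ¬ Cov G (p 1) r
  · rw [if_pos h1]
    exact ⟨hrC, h1.1, h1.2⟩
  · rw [if_neg h1, dif_pos h]
    exact h.choose_spec.2

open Classical in
lemma robberStrat_stay {V : Type u} (G : SimpleGraph V) (C : Set V)
    (n : ℕ) (p : Fin 2 → V) (r : V)
    (h1 : ¬ Cov G (p 0) r) (h2 : ¬ Cov G (p 1) r) :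
    (robberStrat G C).move n p r = r := by
  unfold robberStrat
  dsimp only
  rw [if_pos ⟨h1, h2⟩]

/-- A single cop not standing at `x0` cannot cover `x0` and both of its
neighbours on the induced 4-cycle. -/
lemma no_single_cover {V : Type u} [Fintype V] {G : SimpleGraph V} {C : Set V}
    (hN : ∀ v : V, (G.neighborSet v ∩ C).ncard ≤ 2)
    {x0 x1 x3 p : V} (h0C : x0 ∈ C) (h1C : x1 ∈ C) (h3C : x3 ∈ C)
    (h01 : x0 ≠ x1) (h03 : x0 ≠ x3) (h13 : x1 ≠ x3)
    (na13 : ¬ G.Adj x1 x3)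
    (hp : p ≠ x0) (c0 : Cov G p x0) (c1 : Cov G p x1) (c3 : Cov G p x3) : False := by
  rcases c1 with rfl | a1
  · rcases c3 with h | a3
    · exact h13 h.symm
    · exact na13 a3
  · rcases c3 with rfl | a3
    · exact na13 a1.symm
    · rcases c0 with rfl | a0
      · exact hp rfl
      · have hsub : ({x0, x1, x3} : Set V) ⊆ G.neighborSet p ∩ C := by
          intro y hy
          simp only [Set.mem_insert_iff, Set.mem_singleton_iff] at hy
          rcases hy with rfl | rfl | rfl
          · exact ⟨(G.mem_neighborSet _ _).2 a0, h0C⟩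
          · exact ⟨(G.mem_neighborSet _ _).2 a1, h1C⟩
          · exact ⟨(G.mem_neighborSet _ _).2 a3, h3C⟩
        have h3 : ({x0, x1, x3} : Set V).ncard = 3 := by
          rw [Set.ncard_insert_of_notMem (by simp [h01, h03]) (Set.toFinite _),
            Set.ncard_pair h13]
        have hle := Set.ncard_le_ncard hsub (Set.toFinite _)
        have hNp := hN p
        omega

/-- Two cops, neither at `x0`, jointly covering `x0` and both of its
cycle-neighbours must jointly be close to `x0`. -/
lemma cover_sum_aux {V : Type u} [Fintype V] {G : SimpleGraph V} (hconn : G.Connected)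
    {C : Set V} (hN : ∀ v : V, (G.neighborSet v ∩ C).ncard ≤ 2)
    {x0 x1 x3 : V} (h0C : x0 ∈ C) (h1C : x1 ∈ C) (h3C : x3 ∈ C)
    (h01 : x0 ≠ x1) (h03 : x0 ≠ x3) (h13 : x1 ≠ x3)
    (a1 : G.Adj x0 x1) (a3 : G.Adj x3 x0) (na13 : ¬ G.Adj x1 x3)
    {q1 q2 : V} (hne : q1 ≠ x0) (hq1 : Cov G q1 x0)
    (h1 : Cov G q1 x1 ∨ Cov G q2 x1) (h3 : Cov G q1 x3 ∨ Cov G q2 x3) :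
    G.dist x0 q1 + G.dist x0 q2 ≤ 3 := by
  have hd1 : G.dist x0 q1 ≤ 1 := dist_le_one_of_cov hq1
  rcases h1 with h1 | h1
  · rcases h3 with h3 | h3
    · exact (no_single_cover hN h0C h1C h3C h01 h03 h13 na13 hne hq1 h1 h3).elim
    · have hq2 : G.dist x0 q2 ≤ G.dist x0 x3 + 1 := dist_le_of_cov hconn h3 x0
      have hx3 : G.dist x0 x3 ≤ 1 := le_of_eq ((dist_eq_one_iff_adj).2 a3.symm)
      omega
  · have hq2 : G.dist x0 q2 ≤ G.dist x0 x1 + 1 := dist_le_of_cov hconn h1 x0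
    have hx1 : G.dist x0 x1 ≤ 1 := le_of_eq ((dist_eq_one_iff_adj).2 a1)
    omega

lemma utrap_sum {V : Type u} [Fintype V] {G : SimpleGraph V} (hconn : G.Connected)
    {C : Set V} (hN : ∀ v : V, (G.neighborSet v ∩ C).ncard ≤ 2)
    {x0 x1 x3 : V} (h0C : x0 ∈ C) (h1C : x1 ∈ C) (h3C : x3 ∈ C)
    (h01 : x0 ≠ x1) (h03 : x0 ≠ x3) (h13 : x1 ≠ x3)
    (a1 : G.Adj x0 x1) (a3 : G.Adj x3 x0) (na13 : ¬ G.Adj x1 x3)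
    {p1 p2 : V} (hp1 : p1 ≠ x0) (hp2 : p2 ≠ x0)
    (hc0 : Cov G p1 x0 ∨ Cov G p2 x0) (hc1 : Cov G p1 x1 ∨ Cov G p2 x1)
    (hc3 : Cov G p1 x3 ∨ Cov G p2 x3) :
    G.dist x0 p1 + G.dist x0 p2 ≤ 3 := by
  rcases hc0 with h | h
  · exact cover_sum_aux hconn hN h0C h1C h3C h01 h03 h13 a1 a3 na13 hp1 h hc1 hc3
  · have := cover_sum_aux hconn hN h0C h1C h3C h01 h03 h13 a1 a3 na13 hp2 h
      hc1.symm hc3.symm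
    omega

/-- If two cops cover the whole induced 4-cycle, their total distance to `x0`
is at most 3. -/
lemma start_sum {V : Type u} [Fintype V] {G : SimpleGraph V} (hconn : G.Connected)
    {C : Set V} (hN : ∀ v : V, (G.neighborSet v ∩ C).ncard ≤ 2)
    {x0 x1 x2 x3 : V} (h0C : x0 ∈ C) (h1C : x1 ∈ C) (h2C : x2 ∈ C) (h3C : x3 ∈ C)
    (h01 : x0 ≠ x1) (h02 : x0 ≠ x2) (h03 : x0 ≠ x3) (h13 : x1 ≠ x3)
    (a1 : G.Adj x0 x1) (a12 : G.Adj x1 x2) (a3 : G.Adj x3 x0)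
    (na13 : ¬ G.Adj x1 x3) (na02 : ¬ G.Adj x0 x2)
    {p1 p2 : V}
    (hc0 : Cov G p1 x0 ∨ Cov G p2 x0) (hc1 : Cov G p1 x1 ∨ Cov G p2 x1)
    (hc2 : Cov G p1 x2 ∨ Cov G p2 x2) (hc3 : Cov G p1 x3 ∨ Cov G p2 x3) :
    G.dist x0 p1 + G.dist x0 p2 ≤ 3 := by
  have hx2 : G.dist x0 x2 ≤ 2 := by
    have t1 : G.dist x0 x1 ≤ 1 := le_of_eq ((dist_eq_one_iff_adj).2 a1)
    have t2 : G.dist x1 x2 ≤ 1 := le_of_eq ((dist_eq_one_iff_adj).2 a12)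
    have t3 := hconn.dist_triangle (u := x0) (v := x1) (w := x2)
    omega
  have key : ∀ q1 q2 : V, Cov G q1 x0 →
      (Cov G q1 x1 ∨ Cov G q2 x1) → (Cov G q1 x2 ∨ Cov G q2 x2) →
      (Cov G q1 x3 ∨ Cov G q2 x3) →
      G.dist x0 q1 + G.dist x0 q2 ≤ 3 := by
    intro q1 q2 hq1 h1 h2 h3
    by_cases hne : q1 = x0
    · have hd1 : G.dist x0 q1 = 0 := by rw [hne]; simp [SimpleGraph.dist_self]
      have h2' : Cov G q2 x2 := by
        rcases h2 with h2 | h2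
        · rcases h2 with h | h
          · exact absurd (h.trans hne).symm h02
          · rw [hne] at h
            exact absurd h na02
        · exact h2
      have hq2 : G.dist x0 q2 ≤ G.dist x0 x2 + 1 := dist_le_of_cov hconn h2' x0
      omega
    · exact cover_sum_aux hconn hN h0C h1C h3C h01 h03 h13 a1 a3 na13 hne hq1 h1 h3
  rcases hc0 with h | h
  · exact key p1 p2 h hc1 hc2 hc3
  · have := key p2 p1 h hc1.symm hc2.symm hc3.symm
    omega


/-- Lemma 2 of the paper.  Let `G` be a finite connected
2-cop-win graph, and `u` a vertex lying on an induced 4-cycle `C` such that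
every vertex of `G` has at most two neighbours in `C`.  If `(c1, c2)` is a
central 2-tuple, then `d(u,c1) + d(u,c2) ≤ 2 capt₂(G) + 1`. -/
theorem dist_central_pair_le {V : Type u} [Fintype V] (G : SimpleGraph V)
    (hconn : G.Connected) (hwin : IsCopWin G 2)
    (C : Set V) (hC : IsInducedC4 G C)
    (hN : ∀ v : V, (G.neighborSet v ∩ C).ncard ≤ 2)
    (u : V) (hu : u ∈ C) (c1 c2 : V) (hc : IsCentralPair G c1 c2) :
    G.dist u c1 + G.dist u c2 ≤ 2 * captTime G 2 + 1 := by
  classical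
  obtain ⟨w0, w1, w2, w3, hCeq, h01, h02, h03, h12, h13, h23,
    a01, a12, a23, a30, na02, na13⟩ := hC
  set T := captTime G 2 with hTdef
  obtain ⟨CM, hCM⟩ := hc
  simp only [← hTdef] at hCM
  by_contra hlt
  push_neg at hlt
  set c0 : Fin 2 → V := ![c1, c2] with hc0
  have hc00 : c0 0 = c1 := by rw [hc0]; simp
  have hc01 : c0 1 = c2 := by rw [hc0]; simp
  -- `T ≥ 1`
  have hT1 : 1 ≤ T := by
    rcases Nat.eq_zero_or_pos T with h0 | h
    · exfalso
      have RMs : RobberMoves G 2 := ⟨fun _ _ r => r, fun _ _ _ => Or.inl rfl⟩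
      have hcap : ∀ r0 : V, ∃ i : Fin 2, c0 i = r0 := by
        intro r0
        have hcc := hCM r0 RMs
        unfold CapturedIn at hcc
        obtain ⟨n, hn, i, hi⟩ := hcc
        rw [h0] at hn
        interval_cases n
        exact ⟨i, hi⟩
      obtain ⟨i0, hi0⟩ := hcap w0
      obtain ⟨i1, hi1⟩ := hcap w1
      obtain ⟨i2, hi2⟩ := hcap w2
      fin_cases i0 <;> fin_cases i1 <;> fin_cases i2 <;> simp_all
    · exact h
  -- a rotated labelling of the cycle with `u` first
  have m0 : w0 ∈ C := by rw [hCeq]; simp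
  have m1' : w1 ∈ C := by rw [hCeq]; simp
  have m2' : w2 ∈ C := by rw [hCeq]; simp
  have m3' : w3 ∈ C := by rw [hCeq]; simp
  have hrot : ∃ x1 x2 x3 : V,
      x1 ∈ C ∧ x2 ∈ C ∧ x3 ∈ C ∧
      u ≠ x1 ∧ u ≠ x2 ∧ u ≠ x3 ∧ x1 ≠ x2 ∧ x1 ≠ x3 ∧ x2 ≠ x3 ∧
      G.Adj u x1 ∧ G.Adj x1 x2 ∧ G.Adj x2 x3 ∧ G.Adj x3 u ∧
      ¬ G.Adj u x2 ∧ ¬ G.Adj x1 x3 ∧ C = {u, x1, x2, x3} := by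
    have hu' : u = w0 ∨ u = w1 ∨ u = w2 ∨ u = w3 := by
      rw [hCeq] at hu
      simpa using hu
    rcases hu' with rfl | rfl | rfl | rfl
    · exact ⟨w1, w2, w3, m1', m2', m3', h01, h02, h03, h12, h13, h23,
        a01, a12, a23, a30, na02, na13, hCeq⟩
    · refine ⟨w2, w3, w0, m2', m3', m0, h12, h13, fun h => h01 h.symm, h23,
        fun h => h02 h.symm, fun h => h03 h.symm,
        a12, a23, a30, a01, na13, fun h => na02 h.symm, ?_⟩
      rw [hCeq]; ext y; simp; tauto
    · refine ⟨w3, w0, w1, m3', m0, m1', h23, fun h => h02 h.symm, fun h => h12 h.symm,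
        fun h => h03 h.symm, fun h => h13 h.symm, h01,
        a23, a30, a01, a12, fun h => na02 h.symm, fun h => na13 h.symm, ?_⟩
      rw [hCeq]; ext y; simp; tauto
    · refine ⟨w0, w1, w2, m0, m1', m2', fun h => h03 h.symm, fun h => h13 h.symm,
        fun h => h23 h.symm, h01, h02, h12,
        a30, a01, a12, a23, fun h => na13 h.symm, na02, ?_⟩
      rw [hCeq]; ext y; simp; tauto
  obtain ⟨x1, x2, x3, m1, m2, m3, d1, d2, d3, d4, d5, d6, b1, b2, b3, b4, n2', n13', hCu⟩ := hrot
  -- distances within the cycle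
  have hdle1 : ∀ {a b : V}, G.Adj a b → G.dist a b ≤ 1 :=
    fun h => le_of_eq (dist_eq_one_iff_adj.2 h)
  have h2step : ∀ {a b c : V}, G.Adj a b → G.Adj b c → G.dist a c ≤ 2 := by
    intro a b c hab hbc
    have ht := hconn.dist_triangle (u := a) (v := b) (w := c)
    have := hdle1 hab
    have := hdle1 hbc
    omega
  have distC : ∀ a ∈ C, ∀ b ∈ C, G.dist a b ≤ 2 := by
    have e1 : G.dist u x1 ≤ 2 := le_trans (hdle1 b1) one_le_two
    have e2 : G.dist u x2 ≤ 2 := h2step b1 b2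
    have e3 : G.dist u x3 ≤ 2 := le_trans (hdle1 b4.symm) one_le_two
    have e4 : G.dist x1 x2 ≤ 2 := le_trans (hdle1 b2) one_le_two
    have e5 : G.dist x1 x3 ≤ 2 := h2step b2 b3
    have e6 : G.dist x2 x3 ≤ 2 := le_trans (hdle1 b3) one_le_two
    intro a ha b hb
    rw [hCu] at ha hb
    simp only [Set.mem_insert_iff, Set.mem_singleton_iff] at ha hb
    rcases ha with rfl | rfl | rfl | rfl <;> rcases hb with rfl | rfl | rfl | rfl <;>
      first
        | simp [SimpleGraph.dist_self]
        | assumption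
        | (rw [SimpleGraph.dist_comm]; assumption)
  -- cop positions move at most one step per round
  have copdist : ∀ (r0 : V) (i : Fin 2) (n : ℕ),
      G.dist u (c0 i) ≤ G.dist u ((playFrom CM (robberStrat G C) c0 r0 n).1 i) + n := by
    intro r0 i n
    induction n with
    | zero => simp [playFrom]
    | succ n ih =>
      have hv := CM.valid n (playFrom CM (robberStrat G C) c0 r0 n).1
        ((robberStrat G C).move n (playFrom CM (robberStrat G C) c0 r0 n).1
          (playFrom CM (robberStrat G C) c0 r0 n).2) i
      have hstep : G.dist u ((playFrom CM (robberStrat G C) c0 r0 n).1 i)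
          ≤ G.dist u ((playFrom CM (robberStrat G C) c0 r0 (n+1)).1 i) + 1 :=
        dist_le_of_cov hconn hv u
      omega
  -- one safe step of the robber
  have step_safe : ∀ (r0 : V) (n : ℕ),
      (playFrom CM (robberStrat G C) c0 r0 n).2 ∈ C →
      (∃ x, (x = (playFrom CM (robberStrat G C) c0 r0 n).2 ∨
          G.Adj (playFrom CM (robberStrat G C) c0 r0 n).2 x) ∧ x ∈ C ∧
          ¬ Cov G ((playFrom CM (robberStrat G C) c0 r0 n).1 0) x ∧
          ¬ Cov G ((playFrom CM (robberStrat G C) c0 r0 n).1 1) x) →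
      (playFrom CM (robberStrat G C) c0 r0 (n+1)).2 ∈ C ∧
        ∀ i, (playFrom CM (robberStrat G C) c0 r0 (n+1)).1 i ≠
          (playFrom CM (robberStrat G C) c0 r0 (n+1)).2 := by
    intro r0 n hrC hex
    have hspec := robberStrat_spec G C n (playFrom CM (robberStrat G C) c0 r0 n).1
      (playFrom CM (robberStrat G C) c0 r0 n).2 hrC hex
    refine ⟨hspec.1, ?_⟩
    intro i heq
    have hv := CM.valid n (playFrom CM (robberStrat G C) c0 r0 n).1
      ((robberStrat G C).move n (playFrom CM (robberStrat G C) c0 r0 n).1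
        (playFrom CM (robberStrat G C) c0 r0 n).2) i
    have heq' : CM.move n (playFrom CM (robberStrat G C) c0 r0 n).1
        ((robberStrat G C).move n (playFrom CM (robberStrat G C) c0 r0 n).1
          (playFrom CM (robberStrat G C) c0 r0 n).2) i
        = (robberStrat G C).move n (playFrom CM (robberStrat G C) c0 r0 n).1
          (playFrom CM (robberStrat G C) c0 r0 n).2 := heq
    rw [heq'] at hv
    fin_cases i
    · exact hspec.2.1 hv
    · exact hspec.2.2 hv
  -- the three main situations
  by_cases hstart : ∃ x, x ∈ C ∧ ¬ Cov G c1 x ∧ ¬ Cov G c2 x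
  · obtain ⟨r0, hr0C, hr0s1, hr0s2⟩ := hstart
    by_cases hfar : T + 3 ≤ G.dist u c1 ∨ T + 3 ≤ G.dist u c2
    · -- one cop starts so far away that it can never help trap the robber
      have hfar' : ∃ j : Fin 2, T + 3 ≤ G.dist u (c0 j) := by
        rcases hfar with h | h
        · exact ⟨0, h⟩
        · exact ⟨1, h⟩
      obtain ⟨j, hj⟩ := hfar'
      have surv : ∀ n, n ≤ T →
          (playFrom CM (robberStrat G C) c0 r0 n).2 ∈ C ∧
          ∀ i, (playFrom CM (robberStrat G C) c0 r0 n).1 i ≠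
            (playFrom CM (robberStrat G C) c0 r0 n).2 := by
        intro n
        induction n with
        | zero =>
          intro _
          refine ⟨hr0C, ?_⟩
          intro i heq
          fin_cases i
          · exact hr0s1 (Or.inl (show r0 = c1 from (show c1 = r0 from heq).symm))
          · exact hr0s2 (Or.inl (show r0 = c2 from (show c2 = r0 from heq).symm))
        | succ n ih =>
          intro hn1
          obtain ⟨hrC, halive⟩ := ih (by omega)
          by_cases hex : ∃ x, (x = (playFrom CM (robberStrat G C) c0 r0 n).2 ∨
              G.Adj (playFrom CM (robberStrat G C) c0 r0 n).2 x) ∧ x ∈ C ∧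
              ¬ Cov G ((playFrom CM (robberStrat G C) c0 r0 n).1 0) x ∧
              ¬ Cov G ((playFrom CM (robberStrat G C) c0 r0 n).1 1) x
          · exact step_safe r0 n hrC hex
          · exfalso
            have hcover : ∀ y : V, (y = (playFrom CM (robberStrat G C) c0 r0 n).2 ∨
                G.Adj (playFrom CM (robberStrat G C) c0 r0 n).2 y) → y ∈ C →
                Cov G ((playFrom CM (robberStrat G C) c0 r0 n).1 0) y ∨
                Cov G ((playFrom CM (robberStrat G C) c0 r0 n).1 1) y := by
              intro y hy1 hy2
              by_contra hcon
              push_neg at hcon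
              exact hex ⟨y, hy1, hy2, hcon.1, hcon.2⟩
            have hrCu : (playFrom CM (robberStrat G C) c0 r0 n).2 = u ∨
                (playFrom CM (robberStrat G C) c0 r0 n).2 = x1 ∨
                (playFrom CM (robberStrat G C) c0 r0 n).2 = x2 ∨
                (playFrom CM (robberStrat G C) c0 r0 n).2 = x3 := by
              have hh : (playFrom CM (robberStrat G C) c0 r0 n).2 ∈
                  ({u, x1, x2, x3} : Set V) := by
                rw [← hCu]
                exact hrC
              simpa using hh
            have hcands : ∃ y1 y2 : V, y1 ∈ C ∧ y2 ∈ C ∧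
                G.Adj (playFrom CM (robberStrat G C) c0 r0 n).2 y1 ∧
                G.Adj (playFrom CM (robberStrat G C) c0 r0 n).2 y2 ∧
                (playFrom CM (robberStrat G C) c0 r0 n).2 ≠ y1 ∧
                (playFrom CM (robberStrat G C) c0 r0 n).2 ≠ y2 ∧ y1 ≠ y2 ∧
                ¬ G.Adj y1 y2 := by
              rcases hrCu with h | h | h | h <;> rw [h]
              · exact ⟨x1, x3, m1, m3, b1, b4.symm, d1, d3, d5, n13'⟩
              · exact ⟨x2, u, m2, hu, b2, b1.symm, d4, fun hh => d1 hh.symm,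
                  fun hh => d2 hh.symm, fun hh => n2' hh.symm⟩
              · exact ⟨x3, x1, m3, m1, b3, b2.symm, d6, fun hh => d4 hh.symm,
                  fun hh => d5 hh.symm, fun hh => n13' hh.symm⟩
              · exact ⟨u, x2, hu, m2, b4, b3.symm, fun hh => d3 hh.symm,
                  fun hh => d6 hh.symm, d2, n2'⟩
            obtain ⟨y1, y2, hy1C, hy2C, hay1, hay2, hne1, hne2, hne12, hna⟩ := hcands
            have hcov_r := hcover _ (Or.inl rfl) hrC
            have hcov_1 := hcover y1 (Or.inr hay1) hy1C
            have hcov_2 := hcover y2 (Or.inr hay2) hy2C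
            have hclose : ∀ i : Fin 2, ∃ y, y ∈ C ∧
                Cov G ((playFrom CM (robberStrat G C) c0 r0 n).1 i) y := by
              intro i
              by_contra hno
              push_neg at hno
              fin_cases i
              · exact no_single_cover hN hrC hy1C hy2C hne1 hne2 hne12 hna (halive 1)
                  (hcov_r.resolve_left (hno _ hrC)) (hcov_1.resolve_left (hno _ hy1C))
                  (hcov_2.resolve_left (hno _ hy2C))
              · exact no_single_cover hN hrC hy1C hy2C hne1 hne2 hne12 hna (halive 0)
                  (hcov_r.resolve_right (hno _ hrC)) (hcov_1.resolve_right (hno _ hy1C))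
                  (hcov_2.resolve_right (hno _ hy2C))
            obtain ⟨y, hyC, hycov⟩ := hclose j
            have hd3 : G.dist u ((playFrom CM (robberStrat G C) c0 r0 n).1 j) ≤ 3 := by
              have hh := dist_le_of_cov hconn hycov u
              have hh2 := distC u hu y hyC
              omega
            have hcd := copdist r0 j n
            omega
      have hcc := hCM r0 (robberStrat G C)
      unfold CapturedIn at hcc
      obtain ⟨n, hn, i, hi⟩ := hcc
      exact (surv n hn).2 i hi
    · push_neg at hfar
      obtain ⟨hf1, hf2⟩ := hfar
      rcases Nat.lt_or_ge T 2 with hT2 | hT2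
      · -- here `T = 1`; the robber survives one round from any safe start
        have hT1' : T = 1 := by omega
        have hcc := hCM r0 (robberStrat G C)
        unfold CapturedIn at hcc
        obtain ⟨n, hn, i, hi⟩ := hcc
        rw [hT1'] at hn
        interval_cases n
        · fin_cases i
          · exact hr0s1 (Or.inl (show r0 = c1 from (show c1 = r0 from hi).symm))
          · exact hr0s2 (Or.inl (show r0 = c2 from (show c2 = r0 from hi).symm))
        · by_cases hex : ∃ x, (x = (playFrom CM (robberStrat G C) c0 r0 0).2 ∨
              G.Adj (playFrom CM (robberStrat G C) c0 r0 0).2 x) ∧ x ∈ C ∧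
              ¬ Cov G ((playFrom CM (robberStrat G C) c0 r0 0).1 0) x ∧
              ¬ Cov G ((playFrom CM (robberStrat G C) c0 r0 0).1 1) x
          · exact (step_safe r0 0 hr0C hex).2 i hi
          · exact hex ⟨r0, Or.inl rfl, hr0C, hr0s1, hr0s2⟩
      · -- the main case: both cops start at distance at least `T` from `u`
        have hd1T : T ≤ G.dist u c1 := by omega
        have hd2T : T ≤ G.dist u c2 := by omega
        have surv3 : ∀ n, n ≤ T - 1 →
            (playFrom CM (robberStrat G C) c0 u n).2 = u := by
          intro n
          induction n with
          | zero => intro _; rfl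
          | succ n ih =>
            intro hn
            have hr := ih (by omega)
            have hsafe : ∀ i : Fin 2,
                ¬ Cov G ((playFrom CM (robberStrat G C) c0 u n).1 i) u := by
              intro i hcv
              have hle1 : G.dist u ((playFrom CM (robberStrat G C) c0 u n).1 i) ≤ 1 :=
                dist_le_one_of_cov hcv
              have hcd := copdist u i n
              have hTle : T ≤ G.dist u (c0 i) := by
                fin_cases i
                · exact hd1T
                · exact hd2T
              omega
            have hs : (playFrom CM (robberStrat G C) c0 u (n+1)).2 =
                (robberStrat G C).move n (playFrom CM (robberStrat G C) c0 u n).1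
                  (playFrom CM (robberStrat G C) c0 u n).2 := rfl
            rw [hs, hr]
            exact robberStrat_stay G C n _ u (hsafe 0) (hsafe 1)
        have alive3 : ∀ n, n ≤ T - 1 → ∀ i,
            (playFrom CM (robberStrat G C) c0 u n).1 i ≠
              (playFrom CM (robberStrat G C) c0 u n).2 := by
          intro n hn i heq
          have hcd := copdist u i n
          rw [heq, surv3 n hn] at hcd
          have hz : G.dist u u = 0 := by simp [SimpleGraph.dist_self]
          have hTle : T ≤ G.dist u (c0 i) := by
            fin_cases i
            · exact hd1T
            · exact hd2T
          omega
        have aliveT : ∀ i, (playFrom CM (robberStrat G C) c0 u T).1 i ≠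
            (playFrom CM (robberStrat G C) c0 u T).2 := by
          have hTm : T - 1 + 1 = T := by omega
          by_cases hex : ∃ x, (x = (playFrom CM (robberStrat G C) c0 u (T-1)).2 ∨
              G.Adj (playFrom CM (robberStrat G C) c0 u (T-1)).2 x) ∧ x ∈ C ∧
              ¬ Cov G ((playFrom CM (robberStrat G C) c0 u (T-1)).1 0) x ∧
              ¬ Cov G ((playFrom CM (robberStrat G C) c0 u (T-1)).1 1) x
          · have hC' : (playFrom CM (robberStrat G C) c0 u (T-1)).2 ∈ C := by
              rw [surv3 (T-1) le_rfl]
              exact hu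
            have hstep := (step_safe u (T-1) hC' hex).2
            rw [hTm] at hstep
            exact hstep
          · exfalso
            have hru := surv3 (T-1) le_rfl
            have hcover : ∀ y : V, (y = (playFrom CM (robberStrat G C) c0 u (T-1)).2 ∨
                G.Adj (playFrom CM (robberStrat G C) c0 u (T-1)).2 y) → y ∈ C →
                Cov G ((playFrom CM (robberStrat G C) c0 u (T-1)).1 0) y ∨
                Cov G ((playFrom CM (robberStrat G C) c0 u (T-1)).1 1) y := by
              intro y hy1 hy2
              by_contra hcon
              push_neg at hcon
              exact hex ⟨y, hy1, hy2, hcon.1, hcon.2⟩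
            have hcu := hcover u (Or.inl hru.symm) hu
            have hcx1 := hcover x1 (Or.inr (by rw [hru]; exact b1)) m1
            have hcx3 := hcover x3 (Or.inr (by rw [hru]; exact b4.symm)) m3
            have hp1 : (playFrom CM (robberStrat G C) c0 u (T-1)).1 0 ≠ u := by
              have hh := alive3 (T-1) le_rfl 0
              rw [hru] at hh
              exact hh
            have hp2 : (playFrom CM (robberStrat G C) c0 u (T-1)).1 1 ≠ u := by
              have hh := alive3 (T-1) le_rfl 1
              rw [hru] at hh
              exact hh
            have hsum := utrap_sum hconn hN hu m1 m3 d1 d3 d5 b1 b4 n13' hp1 hp2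
              hcu hcx1 hcx3
            have hcd0 := copdist u 0 (T-1)
            have hcd1 := copdist u 1 (T-1)
            rw [hc00] at hcd0
            rw [hc01] at hcd1
            omega
        have hcc := hCM u (robberStrat G C)
        unfold CapturedIn at hcc
        obtain ⟨n, hn, i, hi⟩ := hcc
        by_cases hnT : n ≤ T - 1
        · exact alive3 n hnT i hi
        · have hnn : n = T := by omega
          subst hnn
          exact aliveT i hi
  · -- no safe starting vertex on the cycle: both cops start very close to `u`
    push_neg at hstart
    have hcov : ∀ x, x ∈ C → Cov G c1 x ∨ Cov G c2 x := by
      intro x hx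
      by_cases h : Cov G c1 x
      · exact Or.inl h
      · exact Or.inr (hstart x hx h)
    have hsum := start_sum hconn hN hu m1 m2 m3 d1 d2 d3 d5 b1 b2 b4 n13' n2'
      (hcov u hu) (hcov x1 m1) (hcov x2 m2) (hcov x3 m3)
    omega
end

section
/- Let G be a finite connected simple graph and let C be an induced cycle of length 4 in G such that for every vertex v of G, |N(v) ∩ V(C)| ≤ 2. Then no vertex of C is a corner of G; that is, for every u ∈ V(C) there is no vertex v ≠ u with N[u] ⊆ N[v]. -/
open SimpleGraph

universe u

lemma aux_no_corner {V : Type u} [Fintype V] (G : SimpleGraph V) (C : Set V)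
    (hN : ∀ v : V, (G.neighborSet v ∩ C).ncard ≤ 2)
    (u x y : V) (huC : u ∈ C) (hxC : x ∈ C) (hyC : y ∈ C)
    (hux : u ≠ x) (huy : u ≠ y) (hxy : x ≠ y)
    (hax : G.Adj u x) (hay : G.Adj u y) (hnxy : ¬ G.Adj x y) :
    ¬ ∃ v : V, v ≠ u ∧ insert u (G.neighborSet u) ⊆ insert v (G.neighborSet v) := by
  rintro ⟨v, hvu, hsub⟩
  have hu' : u ∈ insert v (G.neighborSet v) := hsub (Set.mem_insert _ _)
  have hvadj : G.Adj v u := by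
    rcases hu' with h | h
    · exact absurd h.symm hvu
    · exact h
  have hx' : x ∈ insert v (G.neighborSet v) := hsub (Set.mem_insert_of_mem _ hax)
  have hy' : y ∈ insert v (G.neighborSet v) := hsub (Set.mem_insert_of_mem _ hay)
  have hvx : G.Adj v x := by
    rcases hx' with h | h
    · subst h
      rcases hy' with h' | h'
      · exact absurd h'.symm hxy
      · exact absurd h' hnxy
    · exact h
  have hvy : G.Adj v y := by
    rcases hy' with h | h
    · subst h
      rcases hx' with h' | h'
      · exact absurd h' hxy
      · exact absurd h' (fun hh => hnxy hh.symm)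
    · exact h
  have hsub3 : ({u, x, y} : Set V) ⊆ G.neighborSet v ∩ C := by
    intro z hz
    rcases hz with rfl | rfl | rfl
    · exact ⟨hvadj, huC⟩
    · exact ⟨hvx, hxC⟩
    · exact ⟨hvy, hyC⟩
  have h3 : ({u, x, y} : Set V).ncard = 3 := by
    rw [Set.ncard_insert_of_notMem (by simp [hux, huy]) (Set.toFinite _),
      Set.ncard_insert_of_notMem (by simp [hxy]) (Set.toFinite _), Set.ncard_singleton]
  have := Set.ncard_le_ncard hsub3 (Set.toFinite _)
  rw [h3] at this
  have := hN v
  omega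

/-- If `C` is an induced 4-cycle in a finite connected graph
`G` such that every vertex of `G` has at most two neighbours in `C`, then no
vertex of `C` is a corner: for `u ∈ C` there is no `v ≠ u` with
`N[u] ⊆ N[v]`. -/
theorem no_corner_on_induced_C4 {V : Type u} [Fintype V] (G : SimpleGraph V)
    (hconn : G.Connected) (C : Set V) (hC : IsInducedC4 G C)
    (hN : ∀ v : V, (G.neighborSet v ∩ C).ncard ≤ 2)
    (u : V) (hu : u ∈ C) :
    ¬ ∃ v : V, v ≠ u ∧ insert u (G.neighborSet u) ⊆ insert v (G.neighborSet v) := by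
  obtain ⟨w0, w1, w2, w3, hCeq, h01, h02, h03, h12, h13, h23,
    a01, a12, a23, a30, n02, n13⟩ := hC
  subst hCeq
  have m0 : w0 ∈ ({w0, w1, w2, w3} : Set V) := by simp
  have m1 : w1 ∈ ({w0, w1, w2, w3} : Set V) := by simp
  have m2 : w2 ∈ ({w0, w1, w2, w3} : Set V) := by simp
  have m3 : w3 ∈ ({w0, w1, w2, w3} : Set V) := by simp
  rcases hu with rfl | rfl | rfl | rfl
  · exact aux_no_corner G _ hN u w1 w3 m0 m1 m3 h01 h03 h13 a01 a30.symm n13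
  · exact aux_no_corner G _ hN u w0 w2 m1 m0 m2 h01.symm h12 h02 a01.symm a12 n02
  · exact aux_no_corner G _ hN u w1 w3 m2 m1 m3 (Ne.symm h12) h23 h13 a12.symm a23 n13
  · exact aux_no_corner G _ hN u w0 w2 m3 m0 m2 (Ne.symm h03) (Ne.symm h23) h02 a30 a23.symm n02
end

section
/- Let T1 and T2 be finite trees, each with at least one edge, and let T1' be the tree obtained from T1 by adding one new vertex adjacent to exactly one vertex of T1. Then capt_2(T1 □ T2) ≤ capt_2(T1' □ T2); that is, adding a leaf to one factor does not decrease the 2-capture time of the Cartesian product. -/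
/-!
Cops and Robber game on a simple graph `G` with `k` cops.
Convention (as in the paper): the cops first choose starting positions, then the
robber chooses a starting position; in every subsequent round the robber moves
first (staying or moving to an adjacent vertex) and then each cop moves
(staying or moving to an adjacent vertex).  The cops win as soon as some cop
occupies the robber's vertex.  Strategies have full information: a move may
depend on the round number and on all current positions.
-/

open SimpleGraph

universe u v w

/-- The graph obtained from `T` by adding one new vertex (`none`) adjacent to
exactly the vertex `x` of `T`. -/
def addLeaf {V : Type u} (T : SimpleGraph V) (x : V) : SimpleGraph (Option V) where
  Adj a b := match a, b with
    | some a, some b => T.Adj a b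
    | some a, none => a = x
    | none, some b => b = x
    | none, none => False
  symm := by
    constructor
    rintro (_ | a) (_ | b) h <;> simp_all [SimpleGraph.adj_comm]
  loopless := by
    constructor
    rintro (_ | a) h <;> simp_all



/-! ## Auxiliary development -/



def Win {V : Type u} (G : SimpleGraph V) (k : ℕ) : ℕ → (Fin k → V) → V → Prop
  | 0, c, r => ∃ i, c i = r
  | (t+1), c, r => (∃ i, c i = r) ∨ ∀ r', (r' = r ∨ G.Adj r r') →
      ∃ c', (∀ i, c' i = c i ∨ G.Adj (c i) (c' i)) ∧ Win G k t c' r'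

lemma win_of_exists {V : Type u} {G : SimpleGraph V} {k t : ℕ} {c : Fin k → V} {r : V}
    (h : ∃ i, c i = r) : Win G k t c r := by
  cases t with
  | zero => exact h
  | succ t => exact Or.inl h

open scoped Classical in
/-- The positional-with-clock strategy extracted from the `Win` predicate. -/
noncomputable def CMwin {V : Type u} (G : SimpleGraph V) (k t : ℕ) : CopMoves G k where
  move n c r :=
    if h : ∃ c', (∀ i, c' i = c i ∨ G.Adj (c i) (c' i)) ∧ Win G k (t - n - 1) c' r then
      h.choose else c
  valid := by
    intro n c r i
    split_ifs with h
    · exact h.choose_spec.1 i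
    · exact Or.inl rfl

lemma CMwin_captures {V : Type u} {G : SimpleGraph V} {k t : ℕ} {c0 : Fin k → V} {r0 : V}
    (h : Win G k t c0 r0) (RM : RobberMoves G k) : CapturedIn (CMwin G k t) RM c0 r0 t := by
  set CM := CMwin G k t with hCM
  have key : ∀ n, n ≤ t →
      (∃ m ≤ n, ∃ i, (playFrom CM RM c0 r0 m).1 i = (playFrom CM RM c0 r0 m).2) ∨
      Win G k (t - n) (playFrom CM RM c0 r0 n).1 (playFrom CM RM c0 r0 n).2 := by
    intro n
    induction n with
    | zero => intro _; right; simpa [playFrom] using h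
    | succ n ih =>
      intro hn
      rcases ih (Nat.le_of_succ_le hn) with hcap | hwin
      · left; obtain ⟨m, hm, hi⟩ := hcap; exact ⟨m, hm.trans (Nat.le_succ n), hi⟩
      · set p := playFrom CM RM c0 r0 n with hp
        by_cases hcap : ∃ i, p.1 i = p.2
        · left; exact ⟨n, Nat.le_succ n, hcap⟩
        · right
          have hlt : n < t := by
            rcases Nat.lt_or_ge n t with h' | h'
            · exact h'
            · exfalso
              have : t - n = 0 := Nat.sub_eq_zero_of_le h'
              rw [this] at hwin
              exact hcap hwin
          obtain ⟨s, hs⟩ : ∃ s, t - n = s + 1 :=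
            ⟨t - n - 1, by omega⟩
          rw [hs] at hwin
          rcases hwin with hcap' | hwin
          · exact absurd hcap' hcap
          · set r' := RM.move n p.1 p.2 with hr'
            have hleg : r' = p.2 ∨ G.Adj p.2 r' := RM.valid n p.1 p.2
            obtain ⟨c', hc', hWc'⟩ := hwin r' hleg
            have hex : ∃ c'', (∀ i, c'' i = p.1 i ∨ G.Adj (p.1 i) (c'' i)) ∧
                Win G k (t - n - 1) c'' r' := ⟨c', hc', by rwa [show t - n - 1 = s by omega]⟩
            have hplay : playFrom CM RM c0 r0 (n+1) = (CM.move n p.1 r', r') := rfl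
            rw [hplay]
            have hmove : CM.move n p.1 r' = hex.choose := by
              simp only [hCM, CMwin, dif_pos hex]
            rw [hmove]
            have := hex.choose_spec.2
            rwa [show t - (n+1) = t - n - 1 by omega]
  rcases key t le_rfl with hcap | hwin
  · obtain ⟨m, hm, hi⟩ := hcap; exact ⟨m, hm, hi⟩
  · rw [Nat.sub_self] at hwin
    exact ⟨t, le_rfl, hwin⟩

/-- From a winning strategy, the backward-induction predicate holds. -/
lemma win_of_strategy {V : Type u} {G : SimpleGraph V} {k : ℕ} :
    ∀ (t : ℕ) (c : Fin k → V) (r : V),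
      (∃ CM : CopMoves G k, ∀ RM, CapturedIn CM RM c r t) → Win G k t c r := by
  intro t
  induction t with
  | zero =>
    intro c r ⟨CM, hCM⟩
    classical
    -- robber that never moves
    obtain ⟨n, hn, i, hi⟩ := hCM ⟨fun _ _ r => r, fun _ _ _ => Or.inl rfl⟩
    interval_cases n
    exact ⟨i, hi⟩
  | succ t ih =>
    intro c r ⟨CM, hCM⟩
    classical
    by_cases hcap : ∃ i, c i = r
    · exact Or.inl hcap
    · right
      intro r' hr'
      set c' := CM.move 0 c r' with hc'
      refine ⟨c', fun i => CM.valid 0 c r' i, ?_⟩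
      apply ih
      refine ⟨⟨fun n => CM.move (n+1), fun n => CM.valid (n+1)⟩, ?_⟩
      intro RM1
      -- build robber strategy on the original game
      set RM : RobberMoves G k :=
        ⟨fun n c'' r'' => if n = 0 then (if r'' = r then r' else r'') else RM1.move (n-1) c'' r'',
         by
           intro n c'' r''
           split_ifs with h1 h2
           · subst h2
             rcases hr' with h | h
             · exact Or.inl h
             · exact Or.inr h
           · exact Or.inl rfl
           · exact RM1.valid (n-1) c'' r''⟩ with hRM
      have hshift : ∀ m, playFrom CM RM c r (m+1) =
          playFrom ⟨fun n => CM.move (n+1), fun n => CM.valid (n+1)⟩ RM1 c' r' m := by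
        intro m
        induction m with
        | zero =>
          have h0 : RM.move 0 c r = r' := by simp [hRM]
          show (CM.move 0 c (RM.move 0 c r), RM.move 0 c r) = (c', r')
          rw [h0]
        | succ m ihm =>
          have hRMm : ∀ cc rr, RM.move (m+1) cc rr = RM1.move m cc rr := by
            intro cc rr; simp [hRM]
          show (CM.move (m+1) (playFrom CM RM c r (m+1)).1
              (RM.move (m+1) (playFrom CM RM c r (m+1)).1 (playFrom CM RM c r (m+1)).2),
              RM.move (m+1) (playFrom CM RM c r (m+1)).1 (playFrom CM RM c r (m+1)).2) = _
          rw [ihm, hRMm]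
          rfl
      obtain ⟨n, hn, i, hi⟩ := hCM RM
      match n, hn with
      | 0, _ =>
        exact absurd ⟨i, hi⟩ hcap
      | (m+1), hn =>
        rw [hshift m] at hi
        exact ⟨m, by omega, i, hi⟩

lemma copsWinIn_of_win {V : Type u} {G : SimpleGraph V} {k t : ℕ} {c0 : Fin k → V}
    (h : ∀ r0, Win G k t c0 r0) : CopsWinIn G k t :=
  ⟨c0, CMwin G k t, fun r0 RM => CMwin_captures (h r0) RM⟩


lemma win_transfer {V : Type u} {V' : Type w} {G : SimpleGraph V} {G' : SimpleGraph V'}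
    {k : ℕ} (f : V' → V) (e : V → V') (hfe : ∀ a, f (e a) = a)
    (he : ∀ a b, G.Adj a b → G'.Adj (e a) (e b))
    (hf : ∀ a b, G'.Adj a b → f a = f b ∨ G.Adj (f a) (f b)) :
    ∀ (t : ℕ) (c' : Fin k → V') (r : V),
      Win G' k t c' (e r) → Win G k t (fun i => f (c' i)) r := by
  intro t
  induction t with
  | zero =>
    rintro c' r ⟨i, hi⟩
    exact ⟨i, by simp only []; rw [hi, hfe]⟩
  | succ t ih =>
    rintro c' r (⟨i, hi⟩ | hW)
    · exact Or.inl ⟨i, by simp only []; rw [hi, hfe]⟩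
    · right
      intro r' hr'
      have hleg : e r' = e r ∨ G'.Adj (e r) (e r') := by
        rcases hr' with h | h
        · exact Or.inl (by rw [h])
        · exact Or.inr (he _ _ h)
      obtain ⟨c'', hc'', hWc''⟩ := hW (e r') hleg
      refine ⟨fun i => f (c'' i), ?_, ih c'' r' hWc''⟩
      intro i
      simp only []
      rcases hc'' i with h | h
      · exact Or.inl (by rw [h])
      · rcases hf _ _ h with h' | h'
        · exact Or.inl h'.symm
        · exact Or.inr h'

/-- A "guide" on a graph: a next-step function toward a target together with a
rank (territory size) that the cop can strictly decrease, while robber moves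
(not through the cop) leave it unchanged. -/
structure Guide {α : Type u} (T : SimpleGraph α) (N : ℕ) where
  nxt : α → α → α
  rank : α → α → ℕ
  rank_le : ∀ a b, rank a b ≤ N
  rank_eq_zero : ∀ a b, rank a b = 0 ↔ a = b
  adj_nxt : ∀ a b, a ≠ b → T.Adj a (nxt a b)
  rank_nxt : ∀ a b, a ≠ b → rank (nxt a b) b < rank a b
  rank_move : ∀ a b b', T.Adj b b' → a ≠ b → a ≠ b' → rank a b' = rank a b
  nxt_adj : ∀ a b, T.Adj a b → nxt a b = b

namespace TreeGuide
open scoped Classical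
set_option linter.unusedSectionVars false

variable {α : Type u} [Fintype α] {T : SimpleGraph α}

/-- Choice of the (unique) path between two vertices of a tree. -/
noncomputable def tPath (hT : T.IsTree) (a b : α) : T.Path a b :=
  ((hT.isConnected.preconnected a b).some).toPath

/-- Territory of the robber at `b` relative to a cop at `a`. -/
def S (T : SimpleGraph α) (a b : α) : Set α := {u | ∃ w : T.Walk b u, a ∉ w.support}

lemma mem_S_self {a b : α} (h : a ≠ b) : b ∈ S T a b :=
  ⟨Walk.nil, by simpa using h⟩

lemma S_self (a : α) : S T a a = ∅ := by
  ext u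
  simp only [S, Set.mem_setOf_eq, Set.mem_empty_iff_false, iff_false, not_exists]
  intro w hw
  exact hw w.start_mem_support

noncomputable def rank (T : SimpleGraph α) (a b : α) : ℕ := (S T a b).ncard

lemma rank_eq_zero {a b : α} : rank T a b = 0 ↔ a = b := by
  constructor
  · intro h
    by_contra hne
    have hb := mem_S_self (T := T) hne
    have : (S T a b).Nonempty := ⟨b, hb⟩
    rw [rank, Set.ncard_eq_zero (Set.toFinite _)] at h
    rw [h] at hb
    exact hb
  · rintro rfl
    rw [rank, S_self, Set.ncard_empty]

lemma S_move {a b b' : α} (hadj : T.Adj b b') (hb : a ≠ b) (hb' : a ≠ b') :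
    S T a b' = S T a b := by
  ext u
  constructor
  · rintro ⟨w, hw⟩
    exact ⟨Walk.cons hadj w, by
      rw [Walk.support_cons]
      simp only [List.mem_cons, not_or]
      exact ⟨hb, hw⟩⟩
  · rintro ⟨w, hw⟩
    exact ⟨Walk.cons hadj.symm w, by
      rw [Walk.support_cons]
      simp only [List.mem_cons, not_or]
      exact ⟨hb', hw⟩⟩

/-- Next vertex from `a` on the unique path toward `b`. -/
noncomputable def nxt (hT : T.IsTree) (a b : α) : α :=
  if h : a = b then a
  else (Walk.exists_eq_cons_of_ne h (tPath hT a b).val).choose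

lemma nxt_spec (hT : T.IsTree) {a b : α} (h : a ≠ b) :
    ∃ (had : T.Adj a (nxt hT a b)) (q : T.Walk (nxt hT a b) b),
      (tPath hT a b).val = Walk.cons had q ∧ a ∉ q.support := by
  have he : nxt hT a b = (Walk.exists_eq_cons_of_ne h (tPath hT a b).val).choose :=
    dif_neg h
  have spec := (Walk.exists_eq_cons_of_ne h (tPath hT a b).val).choose_spec
  rw [← he] at spec
  obtain ⟨had, q, hq⟩ := spec
  refine ⟨had, q, hq, ?_⟩
  have hp := (tPath hT a b).prop
  rw [hq, Walk.cons_isPath_iff] at hp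
  exact hp.2

lemma adj_nxt (hT : T.IsTree) {a b : α} (h : a ≠ b) : T.Adj a (nxt hT a b) :=
  (nxt_spec hT h).choose

lemma rank_nxt (hT : T.IsTree) {a b : α} (h : a ≠ b) :
    rank T (nxt hT a b) b < rank T a b := by
  set c := nxt hT a b with hc
  obtain ⟨had, q, hpq, haq⟩ := nxt_spec hT h
  have hcS : c ∈ S T a b := by
    refine ⟨q.reverse, ?_⟩
    rw [Walk.support_reverse, List.mem_reverse]
    exact haq
  have hcnot : c ∉ S T c b := by
    rintro ⟨w, hw⟩
    exact hw w.end_mem_support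
  have hsub : S T c b ⊆ S T a b := by
    rintro u ⟨w, hw⟩
    set π := w.toPath with hπ
    have hπc : c ∉ π.val.support := fun hmem => hw (Walk.support_toPath_subset w hmem)
    have hπa : a ∉ π.val.support := by
      by_contra ha
      set t := π.val.takeUntil a ha with ht
      have htc : c ∉ t.support := fun hmem =>
        hπc (Walk.support_takeUntil_subset _ ha hmem)
      set t' := t.toPath with ht'
      have ht'c : c ∉ t'.val.support := fun hmem =>
        htc (Walk.support_toPath_subset t hmem)
      have huniq : t'.reverse = tPath hT a b := hT.IsAcyclic.path_unique _ _
      have hcmem : c ∈ (tPath hT a b).val.support := by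
        rw [hpq, Walk.support_cons]
        exact List.mem_cons_of_mem _ q.start_mem_support
      rw [← huniq] at hcmem
      have : c ∈ t'.val.support := by
        have := hcmem
        simp only [Path.reverse, Walk.support_reverse, List.mem_reverse] at this
        exact this
      exact ht'c this
    exact ⟨π.val, hπa⟩
  have hss : S T c b ⊂ S T a b := by
    refine ⟨hsub, fun hsup => hcnot (hsup hcS)⟩
  exact Set.ncard_lt_ncard hss (Set.toFinite _)

lemma nxt_adj (hT : T.IsTree) {a b : α} (hadj : T.Adj a b) : nxt hT a b = b := by
  have h : a ≠ b := hadj.ne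
  obtain ⟨had, q, hpq, haq⟩ := nxt_spec hT h
  have hedge : (⟨Walk.cons hadj Walk.nil, by simp [hadj.ne]⟩ : T.Path a b) = tPath hT a b :=
    hT.IsAcyclic.path_unique _ _
  have := congrArg (fun p : T.Path a b => p.val.support) hedge
  simp only [Walk.support_cons, Walk.support_nil] at this
  rw [hpq, Walk.support_cons, Walk.support_eq_cons q] at this
  exact (List.cons.injEq _ _ _ _).mp ((List.cons.injEq _ _ _ _).mp this.symm).2 |>.1

lemma rank_le (a b : α) : rank T a b ≤ Fintype.card α := by
  rw [rank, ← Nat.card_eq_fintype_card, ← Set.ncard_univ]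
  exact Set.ncard_le_ncard (Set.subset_univ _) Set.finite_univ

/-- A finite tree carries a guide. -/
noncomputable def guide (hT : T.IsTree) : Guide T (Fintype.card α) where
  nxt := nxt hT
  rank := rank T
  rank_le := rank_le
  rank_eq_zero := fun _ _ => rank_eq_zero
  adj_nxt := fun _ _ h => adj_nxt hT h
  rank_nxt := fun _ _ h => rank_nxt hT h
  rank_move := fun a b b' hadj hb hb' => by
    show (S T a b').ncard = (S T a b).ncard
    rw [S_move hadj hb hb']
  nxt_adj := fun _ _ h => nxt_adj hT h

end TreeGuide

section Product

variable {α : Type u} {β : Type v} {A : SimpleGraph α} {B : SimpleGraph β} {NA NB : ℕ}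

open scoped Classical

/-- Cop step with priority on the first coordinate. -/
noncomputable def step1 (gA : Guide A NA) (gB : Guide B NB) (c r : α × β) : α × β :=
  if c.1 = r.1 then (if c.2 = r.2 then c else (c.1, gB.nxt c.2 r.2))
  else (gA.nxt c.1 r.1, c.2)

/-- Potential of a cop playing with priority on the first coordinate. -/
def phi1 (gA : Guide A NA) (gB : Guide B NB) (c r : α × β) : ℕ :=
  (NB + 1) * gA.rank c.1 r.1 + gB.rank c.2 r.2

lemma step1_valid (gA : Guide A NA) (gB : Guide B NB) (c r : α × β) :
    step1 gA gB c r = c ∨ (A □ B).Adj c (step1 gA gB c r) := by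
  obtain ⟨a, b⟩ := c
  obtain ⟨p, q⟩ := r
  rw [step1]
  dsimp only
  split_ifs with h1 h2
  · exact Or.inl rfl
  · exact Or.inr (by
      rw [boxProd_adj]
      exact Or.inr ⟨gB.adj_nxt _ _ h2, rfl⟩)
  · exact Or.inr (by
      rw [boxProd_adj]
      exact Or.inl ⟨gA.adj_nxt _ _ h1, rfl⟩)

lemma phi1_pos (gA : Guide A NA) (gB : Guide B NB) {c r : α × β} (h : c ≠ r) :
    1 ≤ phi1 gA gB c r := by
  rw [phi1]
  by_cases h1 : gA.rank c.1 r.1 = 0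
  · have h1' : c.1 = r.1 := (gA.rank_eq_zero _ _).mp h1
    have h2 : c.2 ≠ r.2 := fun h2 => h (Prod.ext h1' h2)
    have : gB.rank c.2 r.2 ≠ 0 := fun h0 => h2 ((gB.rank_eq_zero _ _).mp h0)
    omega
  · have : 1 ≤ gA.rank c.1 r.1 := Nat.one_le_iff_ne_zero.mpr h1
    calc 1 ≤ (NB + 1) * 1 := by omega
    _ ≤ (NB + 1) * gA.rank c.1 r.1 := Nat.mul_le_mul_left _ this
    _ ≤ _ := Nat.le_add_right _ _

/-- Key single-round lemma for the priority-first-coordinate cop. -/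
lemma key1 (gA : Guide A NA) (gB : Guide B NB) (c r r' : α × β) (hne : c ≠ r)
    (hleg : r' = r ∨ (A □ B).Adj r r') :
    step1 gA gB c r' = r' ∨
    phi1 gA gB (step1 gA gB c r') r' < phi1 gA gB c r ∨
    (c.1 = r.1 ∧ r'.1 ≠ r.1 ∧ phi1 gA gB (step1 gA gB c r') r' = phi1 gA gB c r) := by
  obtain ⟨a, b⟩ := c
  obtain ⟨p, q⟩ := r
  obtain ⟨p', q'⟩ := r'
  have hcases : (p' = p ∧ q' = q) ∨ (A.Adj p p' ∧ q' = q) ∨ (p' = p ∧ B.Adj q q') := by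
    rcases hleg with h | h
    · left; exact ⟨congrArg Prod.fst h, congrArg Prod.snd h⟩
    · rw [boxProd_adj] at h
      rcases h with ⟨h1, h2⟩ | ⟨h1, h2⟩
      · right; left; exact ⟨h1, h2.symm⟩
      · right; right; exact ⟨h2.symm, h1⟩
  by_cases h1 : a = p'
  · -- cop already shares the first coordinate with the new robber position
    by_cases h2 : b = q'
    · left
      rw [step1]
      dsimp only
      rw [if_pos h1, if_pos h2, h1, h2]
    · have hstep : step1 gA gB (a, b) (p', q') = (a, gB.nxt b q') := by
        rw [step1]; dsimp only; rw [if_pos h1, if_neg h2]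
      right
      have hB : gB.rank (gB.nxt b q') q' < gB.rank b q' := gB.rank_nxt _ _ h2
      have hA0 : gA.rank a p' = 0 := (gA.rank_eq_zero _ _).mpr h1
      by_cases hp : p' = p
      · -- a = p' = p ; so b ≠ q by hne
        have hbq : b ≠ q := by
          intro hbq; exact hne (Prod.ext (h1.trans hp) hbq)
        left
        rw [hstep, phi1, phi1]
        dsimp only
        have hA0' : gA.rank a p = 0 := (gA.rank_eq_zero _ _).mpr (h1.trans hp)
        rw [hA0, hA0']
        rcases hcases with ⟨_, hq⟩ | ⟨hadj, hq⟩ | ⟨_, hq⟩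
        · rw [hq] at hB ⊢; omega
        · rw [hq] at hB ⊢; omega
        · have : gB.rank b q' = gB.rank b q := gB.rank_move _ _ _ hq hbq h2
          rw [this] at hB; omega
      · -- robber moved in the first coordinate onto the cop's column
        left
        have hq : q' = q := by
          rcases hcases with ⟨h', _⟩ | ⟨_, h'⟩ | ⟨h', _⟩
          · exact absurd h' hp
          · exact h'
          · exact absurd h' hp
        have hApos : gA.rank a p ≠ 0 := fun h0 =>
          hp (h1.symm.trans ((gA.rank_eq_zero _ _).mp h0))
        rw [hstep, phi1, phi1]
        dsimp only
        subst hq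
        rw [hA0]
        have h4 : (NB + 1) * 1 ≤ (NB + 1) * gA.rank a p :=
          Nat.mul_le_mul_left _ (Nat.one_le_iff_ne_zero.mpr hApos)
        omega
  · -- cop steps in the first coordinate
    have hstep : step1 gA gB (a, b) (p', q') = (gA.nxt a p', b) := by
      rw [step1]; dsimp only; rw [if_neg h1]
    have hA : gA.rank (gA.nxt a p') p' < gA.rank a p' := gA.rank_nxt _ _ h1
    rcases hcases with ⟨hp, hq⟩ | ⟨hadj, hq⟩ | ⟨hp, hq⟩
    · -- robber stayed
      right; left
      subst hp; subst hq
      rw [hstep, phi1, phi1]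
      dsimp only
      have := Nat.mul_le_mul_left (NB + 1) hA
      rw [Nat.mul_succ] at this
      omega
    · -- robber moved in the first coordinate
      by_cases ha : a = p
      · -- exception: cop mirrors
        right; right
        refine ⟨ha, fun h => h1 (ha.trans h.symm), ?_⟩
        have hnx : gA.nxt a p' = p' := gA.nxt_adj _ _ (ha ▸ hadj)
        rw [hstep, phi1, phi1]
        dsimp only
        rw [hnx, hq]
        rw [(gA.rank_eq_zero p' p').mpr rfl, (gA.rank_eq_zero a p).mpr ha]
      · right; left
        subst hq
        have hmv : gA.rank a p' = gA.rank a p := gA.rank_move _ _ _ hadj ha h1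
        rw [hstep, phi1, phi1]
        dsimp only
        rw [hmv] at hA
        have := Nat.mul_le_mul_left (NB + 1) hA
        rw [Nat.mul_succ] at this
        omega
    · -- robber moved in the second coordinate, so p' = p and cop gains a full weight
      right; left
      rw [hstep, phi1, phi1]
      dsimp only
      rw [hp] at hA ⊢
      have hb' : gB.rank b q' ≤ NB := gB.rank_le _ _
      have h4 : (NB + 1) * (gA.rank (gA.nxt a p) p + 1) ≤ (NB + 1) * gA.rank a p :=
        Nat.mul_le_mul_left _ hA
      have h5 : (NB + 1) * (gA.rank (gA.nxt a p) p + 1)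
          = (NB + 1) * gA.rank (gA.nxt a p) p + (NB + 1) := by ring
      omega


/-- Cop step with priority on the second coordinate. -/
noncomputable def step2 (gA : Guide A NA) (gB : Guide B NB) (c r : α × β) : α × β :=
  ((step1 gB gA (c.2, c.1) (r.2, r.1)).2, (step1 gB gA (c.2, c.1) (r.2, r.1)).1)

def phi2 (gA : Guide A NA) (gB : Guide B NB) (c r : α × β) : ℕ :=
  phi1 gB gA (c.2, c.1) (r.2, r.1)

lemma boxProd_swap {u w : α × β} :
    (A □ B).Adj u w ↔ (B □ A).Adj (u.2, u.1) (w.2, w.1) := by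
  simp only [boxProd_adj]
  tauto

lemma step2_valid (gA : Guide A NA) (gB : Guide B NB) (c r : α × β) :
    step2 gA gB c r = c ∨ (A □ B).Adj c (step2 gA gB c r) := by
  rcases step1_valid gB gA (c.2, c.1) (r.2, r.1) with h | h
  · left
    rw [step2, h]
  · right
    rw [boxProd_swap]
    simpa [step2] using h

lemma key2 (gA : Guide A NA) (gB : Guide B NB) (c r r' : α × β) (hne : c ≠ r)
    (hleg : r' = r ∨ (A □ B).Adj r r') :
    step2 gA gB c r' = r' ∨
    phi2 gA gB (step2 gA gB c r') r' < phi2 gA gB c r ∨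
    (c.2 = r.2 ∧ r'.2 ≠ r.2 ∧ phi2 gA gB (step2 gA gB c r') r' = phi2 gA gB c r) := by
  have hne' : ((c.2, c.1) : β × α) ≠ (r.2, r.1) := by
    intro h
    exact hne (Prod.ext (congrArg Prod.snd h) (congrArg Prod.fst h))
  have hleg' : ((r'.2, r'.1) : β × α) = (r.2, r.1) ∨ (B □ A).Adj (r.2, r.1) (r'.2, r'.1) := by
    rcases hleg with h | h
    · exact Or.inl (by rw [h])
    · exact Or.inr (boxProd_swap.mp h)
  rcases key1 gB gA (c.2, c.1) (r.2, r.1) (r'.2, r'.1) hne' hleg' with h | h | h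
  · left
    rw [step2, h]
  · right; left
    rw [phi2, phi2, step2]
    exact h
  · right; right
    refine ⟨h.1, h.2.1, ?_⟩
    rw [phi2, phi2, step2]
    exact h.2.2

/-- Two cops with guides on the factors capture on the box product. -/
lemma product_win (gA : Guide A NA) (gB : Guide B NB) :
    ∀ (t : ℕ) (c : Fin 2 → α × β) (r : α × β),
      phi1 gA gB (c 0) r + phi2 gA gB (c 1) r ≤ t → Win (A □ B) 2 t c r := by
  intro t
  induction t with
  | zero =>
    intro c r hphi
    by_contra hcap
    rw [Win] at hcap
    push_neg at hcap
    have h0 : c 0 ≠ r := hcap 0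
    have := phi1_pos gA gB h0
    omega
  | succ t ih =>
    intro c r hphi
    by_cases hcap : ∃ i, c i = r
    · exact win_of_exists hcap
    · push_neg at hcap
      refine Or.inr ?_
      intro r' hleg
      refine ⟨![step1 gA gB (c 0) r', step2 gA gB (c 1) r'], ?_, ?_⟩
      · intro i
        fin_cases i
        · simpa using step1_valid gA gB (c 0) r'
        · simpa using step2_valid gA gB (c 1) r'
      · by_cases hc1 : step1 gA gB (c 0) r' = r'
        · exact win_of_exists ⟨0, by simpa using hc1⟩
        · by_cases hc2 : step2 gA gB (c 1) r' = r'
          · exact win_of_exists ⟨1, by simpa using hc2⟩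
          · apply ih
            have k1 := key1 gA gB (c 0) r r' (hcap 0) hleg
            have k2 := key2 gA gB (c 1) r r' (hcap 1) hleg
            rcases k1 with h | h1 | h1
            · exact absurd h hc1
            all_goals rcases k2 with h | h2 | h2
            · exact absurd h hc2
            · simp only [Matrix.cons_val_zero, Matrix.cons_val_one, Matrix.head_cons]
              omega
            · simp only [Matrix.cons_val_zero, Matrix.cons_val_one, Matrix.head_cons]
              omega
            · exact absurd h hc2
            · simp only [Matrix.cons_val_zero, Matrix.cons_val_one, Matrix.head_cons]
              omega
            · exfalso
              have hx1 := h1.2.1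
              have hx2 := h2.2.1
              rcases hleg with h | h
              · exact hx1 (congrArg Prod.fst h)
              · rw [boxProd_adj] at h
                rcases h with ⟨_, h⟩ | ⟨_, h⟩
                · exact hx2 h.symm
                · exact hx1 h.symm


/-- Two guided factors give a uniform capture-time bound on the box product. -/
lemma product_copsWinIn [Nonempty α] [Nonempty β] (gA : Guide A NA) (gB : Guide B NB) :
    CopsWinIn (A □ B) 2 (((NB + 1) * NA + NB) + ((NA + 1) * NB + NA)) := by
  classical
  refine copsWinIn_of_win
    (c0 := fun _ => (Classical.arbitrary α, Classical.arbitrary β)) ?_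
  intro r0
  refine product_win gA gB _ _ _ ?_
  have h1 : phi1 gA gB (Classical.arbitrary α, Classical.arbitrary β) r0
      ≤ (NB + 1) * NA + NB := by
    rw [phi1]
    exact add_le_add (Nat.mul_le_mul_left _ (gA.rank_le _ _)) (gB.rank_le _ _)
  have h2 : phi2 gA gB (Classical.arbitrary α, Classical.arbitrary β) r0
      ≤ (NA + 1) * NB + NA := by
    rw [phi2, phi1]
    exact add_le_add (Nat.mul_le_mul_left _ (gB.rank_le _ _)) (gA.rank_le _ _)
  omega


end Product


section AddLeafTree

variable {V1 : Type u} {T1 : SimpleGraph V1} {x : V1}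

lemma addLeaf_adj_some_some {a b : V1} : (addLeaf T1 x).Adj (some a) (some b) ↔ T1.Adj a b :=
  Iff.rfl

lemma addLeaf_adj_none {o : Option V1} (h : (addLeaf T1 x).Adj none o) : o = some x := by
  cases o with
  | none => exact absurd h (by simp [addLeaf])
  | some b => have : b = x := h; rw [this]

/-- The embedding of `T1` into `addLeaf T1 x` as a graph homomorphism. -/
def addLeafHom (T1 : SimpleGraph V1) (x : V1) : T1 →g addLeaf T1 x where
  toFun := some
  map_rel' := fun h => h

lemma addLeaf_connected (hT1 : T1.IsTree) : (addLeaf T1 x).Connected := by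
  have hreach : ∀ u v : V1, (addLeaf T1 x).Reachable (some u) (some v) := fun u v =>
    (hT1.isConnected.preconnected u v).map (addLeafHom T1 x)
  have hnx : (addLeaf T1 x).Reachable none (some x) :=
    SimpleGraph.Adj.reachable (by show x = x; rfl)
  constructor
  intro u v
  cases u with
  | none =>
    cases v with
    | none => exact Reachable.refl _
    | some v => exact hnx.trans (hreach x v)
  | some u =>
    cases v with
    | none => exact (hnx.trans (hreach x u)).symm
    | some v => exact hreach u v

/-- Walks of `addLeaf T1 x` avoiding the new vertex descend to walks in `T1`. -/
lemma addLeaf_descend :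
    ∀ {u v : Option V1} (w : (addLeaf T1 x).Walk u v), none ∉ w.support →
    ∀ u' v', u = some u' → v = some v' →
    ∃ w' : T1.Walk u' v', w'.edges.map (Sym2.map some) = w.edges ∧
      w'.length = w.length ∧ w'.support.map some = w.support := by
  intro u v w
  induction w with
  | nil =>
    intro _ u' v' hu hv
    have : u' = v' := by rw [hu] at hv; exact Option.some_injective _ hv.symm ▸ rfl
    subst this
    exact ⟨Walk.nil, by simp, by simp, by simp [hu]⟩
  | @cons a m b hadj p ih =>
    intro hsup u' v' hu hv
    rw [Walk.support_cons] at hsup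
    have hm : m ∈ p.support := p.start_mem_support
    have hpn : none ∉ p.support := fun h => hsup (List.mem_cons_of_mem _ h)
    obtain ⟨m', hm'⟩ : ∃ m', m = some m' := by
      cases m with
      | none => exact absurd hm hpn
      | some m' => exact ⟨m', rfl⟩
    subst hu; subst hm'
    have hadj' : T1.Adj u' m' := hadj
    obtain ⟨p', he, hl, hs⟩ := ih hpn m' v' rfl hv
    refine ⟨Walk.cons hadj' p', ?_, ?_, ?_⟩
    · rw [Walk.edges_cons, Walk.edges_cons, List.map_cons, he, Sym2.map_pair_eq]
    · simp [hl]
    · rw [Walk.support_cons, Walk.support_cons, List.map_cons, hs]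

lemma addLeaf_acyclic (hT1 : T1.IsTree) : (addLeaf T1 x).IsAcyclic := by
  classical
  intro v c hc
  by_cases hn : (none : Option V1) ∈ c.support
  · -- rotate the cycle to start at the leaf; both its first and last edges are
    -- the unique edge at the leaf, contradicting nodup edges
    have hd : ((c.rotate (u := none) hn).IsCycle) := hc.rotate hn
    set d := c.rotate (u := none) hn with hdd
    clear_value d
    cases d with
    | nil => exact hd.ne_nil rfl
    | @cons _ m _ h q =>
      have hm : m = some x := addLeaf_adj_none h
      subst hm
      have hqe : s(none, some x) ∈ q.edges := by
        obtain ⟨m2, h2, q2, hq2⟩ :=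
          Walk.exists_eq_cons_of_ne (by simp : (none : Option V1) ≠ some x) q.reverse
        have hm2 : m2 = some x := addLeaf_adj_none h2
        subst hm2
        have : s(none, some x) ∈ q.reverse.edges := by
          rw [hq2, Walk.edges_cons]
          exact List.mem_cons_self
        rwa [Walk.edges_reverse, List.mem_reverse] at this
      have hnodup := hd.edges_nodup
      rw [Walk.edges_cons] at hnodup
      exact (List.nodup_cons.mp hnodup).1 hqe
  · obtain ⟨v0, hv0⟩ : ∃ v0, v = some v0 := by
      cases v with
      | none => exact absurd c.start_mem_support hn
      | some v0 => exact ⟨v0, rfl⟩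
    subst hv0
    obtain ⟨w', he, hl, hs⟩ := addLeaf_descend c hn v0 v0 rfl rfl
    have hcyc : w'.IsCycle := by
      refine ⟨⟨⟨?_⟩, ?_⟩, ?_⟩
      · have := hc.edges_nodup
        rw [← he] at this
        exact this.of_map _
      · intro hnil
        have h3 := hc.three_le_length
        rw [hnil] at hl
        simp at hl
        omega
      · have := hc.support_nodup
        rw [← hs, ← List.map_tail] at this
        exact this.of_map _
    exact hT1.IsAcyclic w' hcyc

lemma addLeaf_isTree (hT1 : T1.IsTree) : (addLeaf T1 x).IsTree :=
  ⟨addLeaf_connected hT1, addLeaf_acyclic hT1⟩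


end AddLeafTree

/-- Adding a leaf to one factor does not decrease the
2-capture time of the Cartesian product of two trees. -/
theorem captTime_le_addLeaf {V1 : Type u} {V2 : Type v}
    [Fintype V1] [Fintype V2] (T1 : SimpleGraph V1) (T2 : SimpleGraph V2)
    (hT1 : T1.IsTree) (hT2 : T2.IsTree)
    (hE1 : ∃ x y, T1.Adj x y) (hE2 : ∃ x y, T2.Adj x y) (x : V1) :
    captTime (T1 □ T2) 2 ≤ captTime (addLeaf T1 x □ T2) 2 := by
  classical
  haveI : Nonempty V2 := hT2.isConnected.nonempty
  haveI : Nonempty V1 := hT1.isConnected.nonempty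
  have hA : (addLeaf T1 x).IsTree := addLeaf_isTree hT1
  set A := addLeaf T1 x with hAdef
  let gA : Guide A (Fintype.card (Option V1)) := TreeGuide.guide hA
  let gB : Guide T2 (Fintype.card V2) := TreeGuide.guide hT2
  have hwin' : CopsWinIn (A □ T2) 2
      (((Fintype.card V2 + 1) * Fintype.card (Option V1) + Fintype.card V2) +
        ((Fintype.card (Option V1) + 1) * Fintype.card V2 + Fintype.card (Option V1))) :=
    product_copsWinIn gA gB
  have hmem : CopsWinIn (A □ T2) 2 (captTime (A □ T2) 2) :=
    Nat.sInf_mem (s := {t | CopsWinIn (A □ T2) 2 t}) ⟨_, hwin'⟩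
  have htrans : CopsWinIn (T1 □ T2) 2 (captTime (A □ T2) 2) := by
    obtain ⟨c0', CM', hC⟩ := hmem
    set t := captTime (A □ T2) 2 with ht
    set f : Option V1 × V2 → V1 × V2 := fun p => (p.1.getD x, p.2) with hfdef
    set e : V1 × V2 → Option V1 × V2 := fun p => (some p.1, p.2) with hedef
    have hfe : ∀ a, f (e a) = a := fun a => rfl
    have he : ∀ a b, (T1 □ T2).Adj a b → (A □ T2).Adj (e a) (e b) := by
      rintro ⟨a, b⟩ ⟨a', b'⟩ h
      rw [boxProd_adj] at h ⊢
      rcases h with ⟨h1, h2⟩ | ⟨h1, h2⟩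
      · exact Or.inl ⟨h1, h2⟩
      · exact Or.inr ⟨h1, by rw [show a = a' from h2]⟩
    have hf : ∀ a b, (A □ T2).Adj a b → f a = f b ∨ (T1 □ T2).Adj (f a) (f b) := by
      rintro ⟨o, b⟩ ⟨o', b'⟩ h
      rw [boxProd_adj] at h
      rcases h with ⟨h1, h2⟩ | ⟨h1, h2⟩
      · rcases o with _ | a <;> rcases o' with _ | a'
        · exact absurd h1 (by simp [hAdef, addLeaf])
        · have hx : a' = x := h1
          left
          exact Prod.ext hx.symm h2
        · have hx : a = x := h1
          left
          exact Prod.ext hx h2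
        · have hadj : T1.Adj a a' := h1
          right
          rw [boxProd_adj]
          exact Or.inl ⟨hadj, h2⟩
      · right
        rw [boxProd_adj]
        refine Or.inr ⟨h1, ?_⟩
        show o.getD x = o'.getD x
        rw [show o = o' from h2]
    have hwr : ∀ r0 : V1 × V2, Win (T1 □ T2) 2 t (fun i => f (c0' i)) r0 := by
      intro r0
      refine win_transfer f e hfe he hf t c0' r0 ?_
      exact win_of_strategy t c0' (e r0) ⟨CM', fun RM => hC (e r0) RM⟩
    exact copsWinIn_of_win hwr
  exact Nat.sInf_le htrans
end
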